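/- arXiv:1411.1788 — 3 statements merged into one kernel-verified Lean document; each statement's English description precedes it below -/
import Mathlib

section
/- If e = xy is an edge in a 2-connected series-parallel graph (G,s,t), then (G,x,y) is a series-parallel graph. -/
/-!
Signed multigraphs (parallel edges allowed), two-terminal graphs,
series/parallel connections and flows, following the terminology of
Kaiser–Rollová, "Nowhere-zero flows in signed series-parallel graphs".

Vertices and edges are labelled by natural numbers.  An edge `e` has the
two endvertices `fst e` and `snd e` (its two half-edges are the ends at
`fst e` and at `snd e`), and `sign e = true` means that `e` is positive.
-/

/-- The value `+1` (pointing towards its endvertex) or `-1` (pointing away)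
of a Boolean direction of a half-edge. -/
def dirVal (b : Bool) : ℤ := if b then 1 else -1

/-- A signed multigraph. -/
structure SignedGraph where
  verts : Finset ℕ
  edges : Finset ℕ
  fst : ℕ → ℕ
  snd : ℕ → ℕ
  sign : ℕ → Bool
  fst_mem : ∀ e ∈ edges, fst e ∈ verts
  snd_mem : ∀ e ∈ edges, snd e ∈ verts

namespace SignedGraph

/-- Edge `e` joins the vertices `u` and `v`. -/
def Joins (G : SignedGraph) (e u v : ℕ) : Prop :=
  (G.fst e = u ∧ G.snd e = v) ∨ (G.fst e = v ∧ G.snd e = u)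

/-- `u` and `v` are adjacent (joined by some edge). -/
def Adj (G : SignedGraph) (u v : ℕ) : Prop := ∃ e ∈ G.edges, G.Joins e u v

/-- The degree of a vertex (each incidence of an edge counts once,
so loops count twice). -/
def degree (G : SignedGraph) (v : ℕ) : ℕ :=
  ∑ e ∈ G.edges, ((if G.fst e = v then 1 else 0) + (if G.snd e = v then 1 else 0))

/-- `e` and `f` are parallel edges: distinct edges joining the same
pair of vertices. -/
def Parallel (G : SignedGraph) (e f : ℕ) : Prop :=
  e ≠ f ∧ ((G.fst e = G.fst f ∧ G.snd e = G.snd f) ∨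
           (G.fst e = G.snd f ∧ G.snd e = G.fst f))

/-- `v` is contained in a 2-cycle (a cycle formed by two parallel edges). -/
def In2Cycle (G : SignedGraph) (v : ℕ) : Prop :=
  ∃ e ∈ G.edges, ∃ f ∈ G.edges, G.Parallel e f ∧ G.fst e ≠ G.snd e ∧
    (G.fst e = v ∨ G.snd e = v)

/-- `beta G` is the number of distinct 2-cycles of `G`. -/
def beta (G : SignedGraph) : ℕ :=
  ((G.edges ×ˢ G.edges).filter fun p => p.1 < p.2 ∧ G.fst p.1 ≠ G.snd p.1 ∧
     ((G.fst p.1 = G.fst p.2 ∧ G.snd p.1 = G.snd p.2) ∨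
      (G.fst p.1 = G.snd p.2 ∧ G.snd p.1 = G.fst p.2))).card

/-- An orientation of a signed graph: `o₁ e` (resp. `o₂ e`) tells whether the
half-edge of `e` at `fst e` (resp. at `snd e`) points towards its endvertex.
Of the two half-edges of a positive edge exactly one points towards its
endvertex, while for a negative edge none or both do. -/
def IsOrientation (G : SignedGraph) (o₁ o₂ : ℕ → Bool) : Prop :=
  ∀ e ∈ G.edges, (G.sign e = true → o₁ e ≠ o₂ e) ∧ (G.sign e = false → o₁ e = o₂ e)

/-- The excess (inflow minus outflow) at a vertex `v`. -/
def excess (G : SignedGraph) (o₁ o₂ : ℕ → Bool) (φ : ℕ → ℤ) (v : ℕ) : ℤ :=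
  ∑ e ∈ G.edges, ((if G.fst e = v then dirVal (o₁ e) * φ e else 0) +
                  (if G.snd e = v then dirVal (o₂ e) * φ e else 0))

/-- `(o₁, o₂, φ)` is a nowhere-zero `k`-flow on `G`: an orientation together
with a valuation of the edges by nonzero integers of absolute value less
than `k` such that at every vertex the inflow equals the outflow. -/
structure IsNZFlow (G : SignedGraph) (k : ℕ) (o₁ o₂ : ℕ → Bool) (φ : ℕ → ℤ) : Prop where
  orient : G.IsOrientation o₁ o₂
  nonzero : ∀ e ∈ G.edges, φ e ≠ 0
  bounded : ∀ e ∈ G.edges, |φ e| < (k : ℤ)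
  conserve : ∀ v ∈ G.verts, G.excess o₁ o₂ φ v = 0

/-- `G` admits a nowhere-zero `k`-flow. -/
def HasNZFlow (G : SignedGraph) (k : ℕ) : Prop := ∃ o₁ o₂ φ, G.IsNZFlow k o₁ o₂ φ

/-- `G` is flow-admissible: it admits a nowhere-zero `k`-flow for some `k`. -/
def FlowAdmissible (G : SignedGraph) : Prop := ∃ k, G.HasNZFlow k

/-- `(vs, es)` is a cycle of `G`: distinct vertices `vs = [v₀, …, v_{m-1}]`,
distinct edges `es = [e₀, …, e_{m-1}]`, where `eᵢ` joins `vᵢ` and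
`v_{i+1 (mod m)}`. -/
structure IsCycle (G : SignedGraph) (vs es : List ℕ) : Prop where
  nonempty : es ≠ []
  len : vs.length = es.length
  vnodup : vs.Nodup
  enodup : es.Nodup
  vmem : ∀ v ∈ vs, v ∈ G.verts
  emem : ∀ e ∈ es, e ∈ G.edges
  link : ∀ i < es.length,
    G.Joins (es.getD i 0) (vs.getD i 0) (vs.getD ((i + 1) % vs.length) 0)

/-- The number of negative edges in a list of edges. -/
def negCount (G : SignedGraph) (es : List ℕ) : ℕ :=
  (es.filter fun e => G.sign e = false).length

/-- A balanced cycle: a cycle with an even number of negative edges. -/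
def IsBalancedCycle (G : SignedGraph) (vs es : List ℕ) : Prop :=
  G.IsCycle vs es ∧ Even (G.negCount es)

/-- An unbalanced cycle: a cycle with an odd number of negative edges. -/
def IsUnbalancedCycle (G : SignedGraph) (vs es : List ℕ) : Prop :=
  G.IsCycle vs es ∧ Odd (G.negCount es)

/-- A signed graph is unbalanced if it contains an unbalanced cycle. -/
def IsUnbalanced (G : SignedGraph) : Prop := ∃ vs es, G.IsUnbalancedCycle vs es

/-- `(vs, es)` is a path of `G` (possibly trivial, i.e. a single vertex). -/
structure IsPath (G : SignedGraph) (vs es : List ℕ) : Prop where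
  nonempty : vs ≠ []
  len : vs.length = es.length + 1
  vnodup : vs.Nodup
  enodup : es.Nodup
  vmem : ∀ v ∈ vs, v ∈ G.verts
  emem : ∀ e ∈ es, e ∈ G.edges
  link : ∀ i < es.length, G.Joins (es.getD i 0) (vs.getD i 0) (vs.getD (i + 1) 0)

/-- A barbell: two edge-disjoint unbalanced cycles together with a path,
which either joins two vertex-disjoint cycles and is internally
vertex-disjoint from them, or is the trivial path at the single
common vertex of the two cycles. -/
structure IsBarbell (G : SignedGraph) (vs₁ es₁ vs₂ es₂ pvs pes : List ℕ) : Prop where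
  cyc1 : G.IsUnbalancedCycle vs₁ es₁
  cyc2 : G.IsUnbalancedCycle vs₂ es₂
  edge_disj : ∀ e ∈ es₁, e ∉ es₂
  path : G.IsPath pvs pes
  shape :
    ((∀ v ∈ vs₁, v ∉ vs₂) ∧
      pvs.getD 0 0 ∈ vs₁ ∧ pvs.getD (pvs.length - 1) 0 ∈ vs₂ ∧
      (∀ i, 0 < i → i < pvs.length - 1 → pvs.getD i 0 ∉ vs₁ ∧ pvs.getD i 0 ∉ vs₂)) ∨
    (∃ w, w ∈ vs₁ ∧ w ∈ vs₂ ∧ (∀ v ∈ vs₁, v ∈ vs₂ → v = w) ∧ pvs = [w] ∧ pes = [])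

/-- The edge `e` is contained in a signed circuit (a balanced cycle
or a barbell). -/
def InSignedCircuit (G : SignedGraph) (e : ℕ) : Prop :=
  (∃ vs es, G.IsBalancedCycle vs es ∧ e ∈ es) ∨
  (∃ vs₁ es₁ vs₂ es₂ pvs pes, G.IsBarbell vs₁ es₁ vs₂ es₂ pvs pes ∧
    (e ∈ es₁ ∨ e ∈ es₂ ∨ e ∈ pes))

/-- `H` is a subgraph of `G` (with the same labels, endvertices and signs). -/
def IsSubgraph (H G : SignedGraph) : Prop :=
  H.verts ⊆ G.verts ∧ H.edges ⊆ G.edges ∧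
  ∀ e ∈ H.edges, H.fst e = G.fst e ∧ H.snd e = G.snd e ∧ H.sign e = G.sign e

/-- Switching at a vertex `v`: the signs of all edges incident with `v`
(i.e. with exactly one end at `v`) are inverted. -/
def switchAt (G : SignedGraph) (v : ℕ) : SignedGraph where
  verts := G.verts
  edges := G.edges
  fst := G.fst
  snd := G.snd
  sign := fun e => if xor (G.fst e == v) (G.snd e == v) then !(G.sign e) else G.sign e
  fst_mem := G.fst_mem
  snd_mem := G.snd_mem

/-- Connectedness of a (nonempty) signed graph. -/
def Connected (G : SignedGraph) : Prop :=
  G.verts.Nonempty ∧ ∀ u ∈ G.verts, ∀ v ∈ G.verts, Relation.ReflTransGen G.Adj u v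

/-- Deletion of a vertex together with all incident edges. -/
def deleteVert (G : SignedGraph) (v : ℕ) : SignedGraph where
  verts := G.verts.erase v
  edges := G.edges.filter fun e => G.fst e ≠ v ∧ G.snd e ≠ v
  fst := G.fst
  snd := G.snd
  sign := G.sign
  fst_mem := by
    intro e he
    simp only [Finset.mem_filter] at he
    exact Finset.mem_erase.mpr ⟨he.2.1, G.fst_mem e he.1⟩
  snd_mem := by
    intro e he
    simp only [Finset.mem_filter] at he
    exact Finset.mem_erase.mpr ⟨he.2.2, G.snd_mem e he.1⟩

/-- `G` is 2-connected: it is connected and remains connected after the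
deletion of any single vertex. -/
def TwoConnected (G : SignedGraph) : Prop :=
  G.Connected ∧ ∀ v ∈ G.verts, (G.deleteVert v).Connected

end SignedGraph

/-- A two-terminal signed graph: a signed graph with two distinguished
distinct vertices, the source terminal `s` and the target terminal `t`. -/
structure TTGraph extends SignedGraph where
  s : ℕ
  t : ℕ
  s_mem : s ∈ verts
  t_mem : t ∈ verts
  s_ne_t : s ≠ t

namespace TTGraph

/-- Switching at a vertex of a two-terminal signed graph. -/
def switchAt (G : TTGraph) (v : ℕ) : TTGraph where
  toSignedGraph := G.toSignedGraph.switchAt v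
  s := G.s
  t := G.t
  s_mem := G.s_mem
  t_mem := G.t_mem
  s_ne_t := G.s_ne_t

end TTGraph

/-- Two two-terminal signed graphs are switching equivalent if one is
obtained from the other by a finite sequence of switchings. -/
def SwitchEquiv (G G' : TTGraph) : Prop :=
  Relation.ReflTransGen (fun A B => ∃ v ∈ A.verts, B = A.switchAt v) G G'

/-- `G` is the series connection `S(H₁, H₂)`: `H₁` and `H₂` are subgraphs
of `G` sharing exactly the vertex `H₁.t = H₂.s`, partitioning the edges,
with `G.s = H₁.s` and `G.t = H₂.t`. -/
structure IsSeriesConn2 (G H₁ H₂ : TTGraph) : Prop where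
  sub1 : SignedGraph.IsSubgraph H₁.toSignedGraph G.toSignedGraph
  sub2 : SignedGraph.IsSubgraph H₂.toSignedGraph G.toSignedGraph
  vert_union : H₁.verts ∪ H₂.verts = G.verts
  vert_inter : H₁.verts ∩ H₂.verts = {H₁.t}
  mid : H₁.t = H₂.s
  edge_union : H₁.edges ∪ H₂.edges = G.edges
  edge_disj : Disjoint H₁.edges H₂.edges
  src : G.s = H₁.s
  tgt : G.t = H₂.t

/-- `G` is the parallel connection `P(H₁, H₂)`: `H₁` and `H₂` are subgraphs
of `G` sharing exactly the two terminals, partitioning the edges, with the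
terminals of `G`, `H₁` and `H₂` identified. -/
structure IsParallelConn2 (G H₁ H₂ : TTGraph) : Prop where
  sub1 : SignedGraph.IsSubgraph H₁.toSignedGraph G.toSignedGraph
  sub2 : SignedGraph.IsSubgraph H₂.toSignedGraph G.toSignedGraph
  vert_union : H₁.verts ∪ H₂.verts = G.verts
  vert_inter : H₁.verts ∩ H₂.verts = {H₁.s, H₁.t}
  src_eq : H₁.s = H₂.s
  tgt_eq : H₁.t = H₂.t
  edge_union : H₁.edges ∪ H₂.edges = G.edges
  edge_disj : Disjoint H₁.edges H₂.edges
  src : G.s = H₁.s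
  tgt : G.t = H₁.t

/-- `G` is a (signed) copy of `K₂`: a single edge joining the two terminals. -/
def IsSignedK2 (G : TTGraph) : Prop :=
  G.verts = {G.s, G.t} ∧ ∃ e, G.edges = {e} ∧ G.toSignedGraph.Joins e G.s G.t

/-- Series-parallel two-terminal graphs: obtained from copies of `K₂` by
iterated series and parallel connections. -/
inductive IsSP : TTGraph → Prop
  | k2 {G} : IsSignedK2 G → IsSP G
  | series {G H₁ H₂} : IsSeriesConn2 G H₁ H₂ → IsSP H₁ → IsSP H₂ → IsSP G
  | parallel {G H₁ H₂} : IsParallelConn2 G H₁ H₂ → IsSP H₁ → IsSP H₂ → IsSP G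

/-- `G` is the series connection `S(H₁, …, Hₙ)` of the graphs in the list
(of length at least two). -/
inductive IsSeriesConnList : TTGraph → List TTGraph → Prop
  | two {G H₁ H₂} : IsSeriesConn2 G H₁ H₂ → IsSeriesConnList G [H₁, H₂]
  | cons {G G' H l} : IsSeriesConn2 G H G' → IsSeriesConnList G' l →
      IsSeriesConnList G (H :: l)

/-- `G` is the parallel connection `P(H₁, …, Hₙ)` of the graphs in the list
(of length at least two). -/
inductive IsParallelConnList : TTGraph → List TTGraph → Prop
  | two {G H₁ H₂} : IsParallelConn2 G H₁ H₂ → IsParallelConnList G [H₁, H₂]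
  | cons {G G' H l} : IsParallelConn2 G H G' → IsParallelConnList G' l →
      IsParallelConnList G (H :: l)

/-- `l` is the list of parts of `G` for a series connection: `G` is a series
connection of the series-parallel graphs in `l`, with `l` of maximum length. -/
def IsSeriesPartsOf (G : TTGraph) (l : List TTGraph) : Prop :=
  IsSeriesConnList G l ∧ (∀ H ∈ l, IsSP H) ∧
  ∀ l', IsSeriesConnList G l' → (∀ H ∈ l', IsSP H) → l'.length ≤ l.length

/-- `l` is the list of parts of `G` for a parallel connection. -/
def IsParallelPartsOf (G : TTGraph) (l : List TTGraph) : Prop :=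
  IsParallelConnList G l ∧ (∀ H ∈ l, IsSP H) ∧
  ∀ l', IsParallelConnList G l' → (∀ H ∈ l', IsSP H) → l'.length ≤ l.length

/-- `l` is the list of parts of `G`. -/
def IsPartsOf (G : TTGraph) (l : List TTGraph) : Prop :=
  IsSeriesPartsOf G l ∨ IsParallelPartsOf G l

/-- `H` is a part of `G`. -/
def IsPart (H G : TTGraph) : Prop := ∃ l, IsPartsOf G l ∧ H ∈ l

/-- `H` is a piece of `G`: there is a sequence `H = H₀, H₁, …, Hₘ = G`
where each `Hⱼ` is a part of `H_{j+1}`; in particular `G` is a piece of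
itself. -/
def IsPiece (H G : TTGraph) : Prop := Relation.ReflTransGen IsPart H G

/-- `G` is of series type: it is a series connection of its parts. -/
def IsSeriesType (G : TTGraph) : Prop := ∃ l, IsSeriesPartsOf G l

/-- `G` is of parallel type: it is a parallel connection of its parts. -/
def IsParallelType (G : TTGraph) : Prop := ∃ l, IsParallelPartsOf G l

/-- `H` is an endpart of `G`: the first or last part of a series
decomposition of `G` into its parts. -/
def IsEndpartOf (H G : TTGraph) : Prop :=
  ∃ l, IsSeriesPartsOf G l ∧ (l.head? = some H ∨ l.getLast? = some H)

/-- `DepthLe G d`: the depth of `G` is at most `d`.  The depth of a signed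
`K₂` is `0`; otherwise it is `1` plus the maximum depth of a part. -/
inductive DepthLe : TTGraph → ℕ → Prop
  | k2 {G d} : IsSignedK2 G → DepthLe G d
  | step {G l d} : IsPartsOf G l → (∀ H ∈ l, DepthLe H d) → DepthLe G (d + 1)

/-- `HasDepth G d`: the depth of `G` is exactly `d`, i.e. `d` is the least
upper bound in the recursive definition of depth. -/
def HasDepth (G : TTGraph) (d : ℕ) : Prop :=
  DepthLe G d ∧ ∀ d' < d, ¬ DepthLe G d'

/-- `G` is reduced: each non-terminal vertex has degree at least `3`, and
no two parallel edges have the same sign. -/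
def IsReducedGraph (G : TTGraph) : Prop :=
  (∀ v ∈ G.verts, v ≠ G.s → v ≠ G.t → 3 ≤ G.toSignedGraph.degree v) ∧
  (∀ e ∈ G.edges, ∀ f ∈ G.edges, G.toSignedGraph.Parallel e f → G.sign e ≠ G.sign f)

/-- `G` is a positive `K₂` (denoted `K₂⁺`). -/
def IsPositiveK2 (G : TTGraph) : Prop :=
  IsSignedK2 G ∧ ∀ e ∈ G.edges, G.sign e = true

/-- `G` is the unbalanced 2-cycle `D`: two parallel edges of opposite signs
joining the two terminals. -/
def IsUnbalanced2Cycle (G : TTGraph) : Prop :=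
  G.verts = {G.s, G.t} ∧ ∃ e f, e ≠ f ∧ G.edges = {e, f} ∧
    G.toSignedGraph.Joins e G.s G.t ∧ G.toSignedGraph.Joins f G.s G.t ∧
    G.sign e ≠ G.sign f

/-- `G` is a string: a copy of `K₂⁺` or `D`, or a series connection of copies
of `K₂⁺` and `D`, in which every non-terminal vertex lies in a 2-cycle. -/
def IsString (G : TTGraph) : Prop :=
  (IsPositiveK2 G ∨ IsUnbalanced2Cycle G ∨
    ∃ l, IsSeriesConnList G l ∧ ∀ H ∈ l, IsPositiveK2 H ∨ IsUnbalanced2Cycle H) ∧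
  ∀ v ∈ G.verts, v ≠ G.s → v ≠ G.t → G.toSignedGraph.In2Cycle v

/-- `G` is a necklace: a parallel connection of two strings, at least one of
which is nontrivial (has more than two vertices). -/
def IsNecklace (G : TTGraph) : Prop :=
  ∃ H₁ H₂, IsParallelConn2 G H₁ H₂ ∧ IsString H₁ ∧ IsString H₂ ∧
    (2 < H₁.verts.card ∨ 2 < H₂.verts.card)

/-- `(o₁, o₂, φ)` is an `(a,b)`-pseudoflow on the two-terminal signed graph
`G`: like a nowhere-zero 6-flow, except that at the source terminal the
outflow exceeds the inflow by `a`, and at the target terminal the inflow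
exceeds the outflow by `b`. -/
structure IsPseudoflow (G : TTGraph) (a b : ℤ) (o₁ o₂ : ℕ → Bool) (φ : ℕ → ℤ) :
    Prop where
  orient : G.toSignedGraph.IsOrientation o₁ o₂
  nonzero : ∀ e ∈ G.edges, φ e ≠ 0
  bounded : ∀ e ∈ G.edges, |φ e| < 6
  conserve : ∀ v ∈ G.verts, v ≠ G.s → v ≠ G.t →
    G.toSignedGraph.excess o₁ o₂ φ v = 0
  out_s : G.toSignedGraph.excess o₁ o₂ φ G.s = -a
  in_t : G.toSignedGraph.excess o₁ o₂ φ G.t = b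

/-- `G` admits an `(a,b)`-pseudoflow. -/
def HasPseudoflow (G : TTGraph) (a b : ℤ) : Prop :=
  ∃ o₁ o₂ φ, IsPseudoflow G a b o₁ o₂ φ

/-- `I₅ = {-5, …, 5}`. -/
noncomputable def I5 : Finset ℤ := Finset.Icc (-5) 5

/-- The pair `(a,b)` is valid for `G`: `a ≠ 0` or `deg(s) ≥ 2`, and
`b ≠ 0` or `deg(t) ≥ 2`. -/
def ValidPair (G : TTGraph) (a b : ℤ) : Prop :=
  (a ≠ 0 ∨ 2 ≤ G.toSignedGraph.degree G.s) ∧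
  (b ≠ 0 ∨ 2 ≤ G.toSignedGraph.degree G.t)

/-- `G` is a flow-admissible signed series-parallel graph with no
nowhere-zero 6-flow, with the minimum number of edges among all such
graphs. -/
def MinCounterexample (G : TTGraph) : Prop :=
  IsSP G ∧ G.toSignedGraph.FlowAdmissible ∧ ¬ G.toSignedGraph.HasNZFlow 6 ∧
  ∀ G' : TTGraph, IsSP G' → G'.toSignedGraph.FlowAdmissible →
    ¬ G'.toSignedGraph.HasNZFlow 6 → G.edges.card ≤ G'.edges.card

/-- `W` is a copy of `S(K₂⁺, D, K₂⁺)`. -/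
def IsSK2DK2 (W : TTGraph) : Prop :=
  ∃ A B C, IsSeriesConnList W [A, B, C] ∧ IsPositiveK2 A ∧
    IsUnbalanced2Cycle B ∧ IsPositiveK2 C

/-- `G'` is obtained from `G` by replacing the piece `H` (with terminals
`H.s`, `H.t`) by the two-terminal graph `W`: the edges and non-terminal
vertices of `H` are removed, `W` (whose new vertices are fresh) is added,
and its terminals are identified with the terminals of `H`. -/
def IsReplacement (G H G' W : TTGraph) : Prop :=
  W.s = H.s ∧ W.t = H.t ∧ G'.s = G.s ∧ G'.t = G.t ∧
  W.verts ∩ G.verts ⊆ {H.s, H.t} ∧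
  G'.verts = (G.verts \ (H.verts \ {H.s, H.t})) ∪ W.verts ∧
  G'.edges = (G.edges \ H.edges) ∪ W.edges ∧
  Disjoint (G.edges \ H.edges) W.edges ∧
  (∀ e ∈ G.edges \ H.edges,
    G'.fst e = G.fst e ∧ G'.snd e = G.snd e ∧ G'.sign e = G.sign e) ∧
  SignedGraph.IsSubgraph W.toSignedGraph G'.toSignedGraph


namespace SPAux

open Finset

/-- Reverse the terminals of a two-terminal graph. -/
def rev (G : TTGraph) : TTGraph :=
  ⟨G.toSignedGraph, G.t, G.s, G.t_mem, G.s_mem, G.s_ne_t.symm⟩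

lemma sub_congr {H A B : TTGraph}
    (hsub : SignedGraph.IsSubgraph H.toSignedGraph A.toSignedGraph)
    (hv : B.verts = A.verts) (he : B.edges = A.edges)
    (hfun : ∀ e ∈ A.edges, B.fst e = A.fst e ∧ B.snd e = A.snd e ∧ B.sign e = A.sign e) :
    SignedGraph.IsSubgraph H.toSignedGraph B.toSignedGraph := by
  obtain ⟨h1, h2, h3⟩ := hsub
  refine ⟨hv ▸ h1, he ▸ h2, fun e heH => ?_⟩
  obtain ⟨f1, f2, f3⟩ := hfun e (h2 heH)
  obtain ⟨g1, g2, g3⟩ := h3 e heH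
  exact ⟨g1.trans f1.symm, g2.trans f2.symm, g3.trans f3.symm⟩

lemma sp_congr {A : TTGraph} (h : IsSP A) (B : TTGraph)
    (hv : B.verts = A.verts) (he : B.edges = A.edges)
    (hs : B.s = A.s) (ht : B.t = A.t)
    (hfun : ∀ e ∈ A.edges, B.fst e = A.fst e ∧ B.snd e = A.snd e ∧ B.sign e = A.sign e) :
    IsSP B := by
  cases h with
  | k2 hk =>
    obtain ⟨hV, e, hE, hj⟩ := hk
    refine IsSP.k2 ⟨by rw [hv, hs, ht, hV], e, by rw [he, hE], ?_⟩
    have heA : e ∈ A.edges := by rw [hE]; exact mem_singleton_self e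
    obtain ⟨f1, f2, _⟩ := hfun e heA
    rcases hj with ⟨h1, h2⟩ | ⟨h1, h2⟩
    · exact Or.inl ⟨by rw [f1, h1, hs], by rw [f2, h2, ht]⟩
    · exact Or.inr ⟨by rw [f1, h1, ht], by rw [f2, h2, hs]⟩
  | series hc s1 s2 =>
    exact IsSP.series
      { sub1 := sub_congr hc.sub1 hv he hfun
        sub2 := sub_congr hc.sub2 hv he hfun
        vert_union := by rw [hv, hc.vert_union]
        vert_inter := hc.vert_inter
        mid := hc.mid
        edge_union := by rw [he, hc.edge_union]
        edge_disj := hc.edge_disj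
        src := by rw [hs, hc.src]
        tgt := by rw [ht, hc.tgt] } s1 s2
  | parallel hc s1 s2 =>
    exact IsSP.parallel
      { sub1 := sub_congr hc.sub1 hv he hfun
        sub2 := sub_congr hc.sub2 hv he hfun
        vert_union := by rw [hv, hc.vert_union]
        vert_inter := hc.vert_inter
        src_eq := hc.src_eq
        tgt_eq := hc.tgt_eq
        edge_union := by rw [he, hc.edge_union]
        edge_disj := hc.edge_disj
        src := by rw [hs, hc.src]
        tgt := by rw [ht, hc.tgt] } s1 s2

lemma IsSP_rev {G : TTGraph} (h : IsSP G) : IsSP (rev G) := by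
  induction h with
  | @k2 G hk =>
    obtain ⟨hV, e, hE, hj⟩ := hk
    exact IsSP.k2 ⟨hV.trans (Finset.pair_comm _ _), e, hE, Or.symm hj⟩
  | @series G H1 H2 hc s1 s2 ih1 ih2 =>
    refine IsSP.series ?_ ih2 ih1
    exact
      { sub1 := hc.sub2
        sub2 := hc.sub1
        vert_union := by
          show H2.verts ∪ H1.verts = G.verts
          rw [Finset.union_comm]; exact hc.vert_union
        vert_inter := by
          show H2.verts ∩ H1.verts = {H2.s}
          rw [Finset.inter_comm, hc.vert_inter, hc.mid]
        mid := hc.mid.symm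
        edge_union := by
          show H2.edges ∪ H1.edges = G.edges
          rw [Finset.union_comm]; exact hc.edge_union
        edge_disj := hc.edge_disj.symm
        src := hc.tgt
        tgt := hc.src }
  | @parallel G H1 H2 hc s1 s2 ih1 ih2 =>
    refine IsSP.parallel ?_ ih1 ih2
    exact
      { sub1 := hc.sub1
        sub2 := hc.sub2
        vert_union := hc.vert_union
        vert_inter := by
          show H1.verts ∩ H2.verts = {H1.t, H1.s}
          rw [hc.vert_inter, Finset.pair_comm]
        src_eq := hc.tgt_eq
        tgt_eq := hc.src_eq
        edge_union := hc.edge_union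
        edge_disj := hc.edge_disj
        src := hc.tgt
        tgt := hc.src }

lemma sp_ne {G : TTGraph} (h : IsSP G) : ∀ e ∈ G.edges, G.fst e ≠ G.snd e := by
  induction h with
  | @k2 G hk =>
    obtain ⟨hV, e0, hE, hj⟩ := hk
    intro e he
    rw [hE, mem_singleton] at he; subst he
    rcases hj with ⟨h1, h2⟩ | ⟨h1, h2⟩
    · rw [h1, h2]; exact G.s_ne_t
    · rw [h1, h2]; exact G.s_ne_t.symm
  | @series G H1 H2 hc s1 s2 ih1 ih2 =>
    intro e he
    rw [← hc.edge_union, mem_union] at he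
    rcases he with h | h
    · obtain ⟨f1, f2, _⟩ := hc.sub1.2.2 e h
      rw [← f1, ← f2]; exact ih1 e h
    · obtain ⟨f1, f2, _⟩ := hc.sub2.2.2 e h
      rw [← f1, ← f2]; exact ih2 e h
  | @parallel G H1 H2 hc s1 s2 ih1 ih2 =>
    intro e he
    rw [← hc.edge_union, mem_union] at he
    rcases he with h | h
    · obtain ⟨f1, f2, _⟩ := hc.sub1.2.2 e h
      rw [← f1, ← f2]; exact ih1 e h
    · obtain ⟨f1, f2, _⟩ := hc.sub2.2.2 e h
      rw [← f1, ← f2]; exact ih2 e h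

lemma parComm {G H1 H2 : TTGraph} (h : IsParallelConn2 G H1 H2) :
    IsParallelConn2 G H2 H1 :=
  { sub1 := h.sub2
    sub2 := h.sub1
    vert_union := by rw [Finset.union_comm]; exact h.vert_union
    vert_inter := by rw [Finset.inter_comm, h.vert_inter, h.src_eq, h.tgt_eq]
    src_eq := h.src_eq.symm
    tgt_eq := h.tgt_eq.symm
    edge_union := by rw [Finset.union_comm]; exact h.edge_union
    edge_disj := h.edge_disj.symm
    src := h.src.trans h.src_eq
    tgt := h.tgt.trans h.tgt_eq }

lemma fresh (s : Finset ℕ) : ∃ f, f ∉ s :=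
  ⟨s.sup id + 1, fun h => by
    have := Finset.le_sup (f := id) h
    simp only [id] at this
    omega⟩

end SPAux

namespace SPAux

open Finset

/-- Substitute the graph `H` for the edge `f` of `G`. -/
def subst (G : TTGraph) (f : ℕ) (H : TTGraph) : TTGraph where
  toSignedGraph :=
    { verts := G.verts ∪ H.verts
      edges := G.edges.erase f ∪ H.edges
      fst := fun e => if e ∈ H.edges then H.fst e else G.fst e
      snd := fun e => if e ∈ H.edges then H.snd e else G.snd e
      sign := fun e => if e ∈ H.edges then H.sign e else G.sign e
      fst_mem := by
        intro e he
        by_cases hH : e ∈ H.edges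
        · simp only [if_pos hH]; exact mem_union_right _ (H.fst_mem e hH)
        · simp only [if_neg hH]
          rcases mem_union.mp he with h | h
          · exact mem_union_left _ (G.fst_mem e (mem_of_mem_erase h))
          · exact absurd h hH
      snd_mem := by
        intro e he
        by_cases hH : e ∈ H.edges
        · simp only [if_pos hH]; exact mem_union_right _ (H.snd_mem e hH)
        · simp only [if_neg hH]
          rcases mem_union.mp he with h | h
          · exact mem_union_left _ (G.snd_mem e (mem_of_mem_erase h))
          · exact absurd h hH }
  s := G.s
  t := G.t
  s_mem := mem_union_left _ G.s_mem
  t_mem := mem_union_left _ G.t_mem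
  s_ne_t := G.s_ne_t

@[simp] lemma subst_verts (G : TTGraph) (f : ℕ) (H : TTGraph) :
    (subst G f H).verts = G.verts ∪ H.verts := rfl
@[simp] lemma subst_edges (G : TTGraph) (f : ℕ) (H : TTGraph) :
    (subst G f H).edges = G.edges.erase f ∪ H.edges := rfl
@[simp] lemma subst_s (G : TTGraph) (f : ℕ) (H : TTGraph) : (subst G f H).s = G.s := rfl
@[simp] lemma subst_t (G : TTGraph) (f : ℕ) (H : TTGraph) : (subst G f H).t = G.t := rfl

lemma subst_fst_mem (G : TTGraph) (f : ℕ) (H : TTGraph) {e : ℕ} (h : e ∈ H.edges) :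
    (subst G f H).fst e = H.fst e := if_pos h
lemma subst_snd_mem (G : TTGraph) (f : ℕ) (H : TTGraph) {e : ℕ} (h : e ∈ H.edges) :
    (subst G f H).snd e = H.snd e := if_pos h
lemma subst_sign_mem (G : TTGraph) (f : ℕ) (H : TTGraph) {e : ℕ} (h : e ∈ H.edges) :
    (subst G f H).sign e = H.sign e := if_pos h
lemma subst_fst_not (G : TTGraph) (f : ℕ) (H : TTGraph) {e : ℕ} (h : e ∉ H.edges) :
    (subst G f H).fst e = G.fst e := if_neg h
lemma subst_snd_not (G : TTGraph) (f : ℕ) (H : TTGraph) {e : ℕ} (h : e ∉ H.edges) :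
    (subst G f H).snd e = G.snd e := if_neg h
lemma subst_sign_not (G : TTGraph) (f : ℕ) (H : TTGraph) {e : ℕ} (h : e ∉ H.edges) :
    (subst G f H).sign e = G.sign e := if_neg h

end SPAux

namespace SPAux

open Finset

lemma subst_SP {G : TTGraph} (hG : IsSP G) :
    ∀ (f : ℕ) (H : TTGraph), f ∈ G.edges → IsSP H →
      H.s = G.fst f → H.t = G.snd f →
      (∀ v ∈ H.verts, v ∈ G.verts → v = H.s ∨ v = H.t) →
      (∀ e ∈ H.edges, e ∈ G.edges → e = f) →
      IsSP (subst G f H) := by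
  induction hG with
  | @k2 G hk =>
    intro f H hf hH hs ht hv hd
    obtain ⟨hV, e0, hE, hj⟩ := hk
    rw [hE, mem_singleton] at hf
    subst hf
    have hE0 : G.edges.erase f = ∅ := by rw [hE, erase_singleton]
    have hst : G.s ∈ H.verts ∧ G.t ∈ H.verts := by
      rcases hj with ⟨h1, h2⟩ | ⟨h1, h2⟩
      · exact ⟨by rw [← h1, ← hs]; exact H.s_mem, by rw [← h2, ← ht]; exact H.t_mem⟩
      · exact ⟨by rw [← h2, ← ht]; exact H.t_mem, by rw [← h1, ← hs]; exact H.s_mem⟩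
    have hsub : G.verts ⊆ H.verts := by
      rw [hV]; intro v hv'
      rcases mem_insert.mp hv' with rfl | hv''
      · exact hst.1
      · rw [mem_singleton] at hv''; subst hv''; exact hst.2
    have hverts : (subst G f H).verts = H.verts := union_eq_right.mpr hsub
    have hedges : (subst G f H).edges = H.edges := by
      rw [subst_edges, hE0, empty_union]
    rcases hj with ⟨h1, h2⟩ | ⟨h1, h2⟩
    · refine sp_congr hH (subst G f H) hverts hedges ?_ ?_ ?_
      · rw [subst_s, hs, h1]
      · rw [subst_t, ht, h2]
      · intro e he
        exact ⟨subst_fst_mem _ _ _ he, subst_snd_mem _ _ _ he, subst_sign_mem _ _ _ he⟩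
    · refine sp_congr (IsSP_rev hH) (subst G f H) hverts hedges ?_ ?_ ?_
      · show G.s = H.t; rw [ht, h2]
      · show G.t = H.s; rw [hs, h1]
      · intro e he
        exact ⟨subst_fst_mem _ _ _ he, subst_snd_mem _ _ _ he, subst_sign_mem _ _ _ he⟩
  | @series G H1 H2 hc sp1 sp2 ih1 ih2 =>
    intro f H hf hH hs ht hv hd
    have hfe := hf
    rw [← hc.edge_union, mem_union] at hfe
    rcases hfe with hf1 | hf2
    · -- f is an edge of H1
      have hfst : H1.fst f = G.fst f := (hc.sub1.2.2 f hf1).1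
      have hsnd : H1.snd f = G.snd f := (hc.sub1.2.2 f hf1).2.1
      have hS1 : IsSP (subst H1 f H) :=
        ih1 f H hf1 hH (hs.trans hfst.symm) (ht.trans hsnd.symm)
          (fun v hvH hv1 => hv v hvH (hc.sub1.1 hv1))
          (fun e heH he1 => hd e heH (hc.sub1.2.1 he1))
      have hsH1 : H.s ∈ H1.verts := by rw [hs, ← hfst]; exact H1.fst_mem f hf1
      have htH1 : H.t ∈ H1.verts := by rw [ht, ← hsnd]; exact H1.snd_mem f hf1
      have hfH2 : f ∉ H2.edges := fun h => disjoint_left.mp hc.edge_disj hf1 h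
      have hH2H : ∀ e ∈ H2.edges, e ∉ H.edges := by
        intro e h2 hh
        have := hd e hh (hc.sub2.2.1 h2)
        subst this; exact hfH2 h2
      have hHH2 : ∀ v ∈ H.verts, v ∈ H2.verts → v = H1.t := by
        intro v h1 h2
        have hmem : v ∈ H1.verts → v = H1.t := by
          intro hv1
          have : v ∈ H1.verts ∩ H2.verts := mem_inter.mpr ⟨hv1, h2⟩
          rw [hc.vert_inter, mem_singleton] at this; exact this
        rcases hv v h1 (hc.sub2.1 h2) with rfl | rfl
        · exact hmem hsH1
        · exact hmem htH1
      refine IsSP.series ?_ hS1 sp2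
      refine
        { sub1 := ⟨union_subset_union_left hc.sub1.1,
            union_subset_union_left (erase_subset_erase f hc.sub1.2.1), ?_⟩
          sub2 := ⟨hc.sub2.1.trans subset_union_left, ?_, ?_⟩
          vert_union := by rw [subst_verts, subst_verts, union_right_comm, hc.vert_union]
          vert_inter := ?_
          mid := hc.mid
          edge_union := ?_
          edge_disj := ?_
          src := hc.src
          tgt := hc.tgt }
      · -- functions of subst H1 f H vs subst G f H
        intro e he
        by_cases heH : e ∈ H.edges
        · rw [subst_fst_mem _ _ _ heH, subst_fst_mem _ _ _ heH,
            subst_snd_mem _ _ _ heH, subst_snd_mem _ _ _ heH,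
            subst_sign_mem _ _ _ heH, subst_sign_mem _ _ _ heH]
          exact ⟨rfl, rfl, rfl⟩
        · have he1 : e ∈ H1.edges := by
            rcases mem_union.mp he with h | h
            · exact mem_of_mem_erase h
            · exact absurd h heH
          rw [subst_fst_not _ _ _ heH, subst_fst_not _ _ _ heH,
            subst_snd_not _ _ _ heH, subst_snd_not _ _ _ heH,
            subst_sign_not _ _ _ heH, subst_sign_not _ _ _ heH]
          exact hc.sub1.2.2 e he1
      · -- H2 edges ⊆ subst edges
        intro e h2
        exact mem_union_left _ (mem_erase.mpr
          ⟨fun h => hfH2 (h ▸ h2), hc.sub2.2.1 h2⟩)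
      · -- H2 functions
        intro e h2
        have heH : e ∉ H.edges := hH2H e h2
        rw [subst_fst_not _ _ _ heH, subst_snd_not _ _ _ heH, subst_sign_not _ _ _ heH]
        exact hc.sub2.2.2 e h2
      · -- vert_inter
        show (H1.verts ∪ H.verts) ∩ H2.verts = {H1.t}
        ext v
        simp only [mem_inter, mem_union, mem_singleton]
        constructor
        · rintro ⟨h1 | hH', h2⟩
          · have : v ∈ H1.verts ∩ H2.verts := mem_inter.mpr ⟨h1, h2⟩
            rw [hc.vert_inter, mem_singleton] at this; exact this
          · exact hHH2 v hH' h2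
        · rintro rfl
          have : H1.t ∈ H1.verts ∩ H2.verts := by
            rw [hc.vert_inter]; exact mem_singleton_self _
          exact ⟨Or.inl (mem_inter.mp this).1, (mem_inter.mp this).2⟩
      · -- edge_union
        show (H1.edges.erase f ∪ H.edges) ∪ H2.edges = G.edges.erase f ∪ H.edges
        have : G.edges.erase f = H1.edges.erase f ∪ H2.edges := by
          rw [← hc.edge_union, erase_union_distrib, erase_eq_of_notMem hfH2]
        rw [this, union_right_comm]
      · -- edge_disj
        show Disjoint (H1.edges.erase f ∪ H.edges) H2.edges
        refine disjoint_union_left.mpr ⟨hc.edge_disj.mono_left (erase_subset f _), ?_⟩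
        exact disjoint_left.mpr fun e he h2 => hH2H e h2 he
    · -- f is an edge of H2
      have hfst : H2.fst f = G.fst f := (hc.sub2.2.2 f hf2).1
      have hsnd : H2.snd f = G.snd f := (hc.sub2.2.2 f hf2).2.1
      have hS2 : IsSP (subst H2 f H) :=
        ih2 f H hf2 hH (hs.trans hfst.symm) (ht.trans hsnd.symm)
          (fun v hvH hv2 => hv v hvH (hc.sub2.1 hv2))
          (fun e heH he2 => hd e heH (hc.sub2.2.1 he2))
      have hsH2 : H.s ∈ H2.verts := by rw [hs, ← hfst]; exact H2.fst_mem f hf2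
      have htH2 : H.t ∈ H2.verts := by rw [ht, ← hsnd]; exact H2.snd_mem f hf2
      have hfH1 : f ∉ H1.edges := fun h => disjoint_left.mp hc.edge_disj h hf2
      have hH1H : ∀ e ∈ H1.edges, e ∉ H.edges := by
        intro e h1 hh
        have := hd e hh (hc.sub1.2.1 h1)
        subst this; exact hfH1 h1
      have hHH1 : ∀ v ∈ H.verts, v ∈ H1.verts → v = H1.t := by
        intro v h1 h2
        have hmem : v ∈ H2.verts → v = H1.t := by
          intro hv2
          have : v ∈ H1.verts ∩ H2.verts := mem_inter.mpr ⟨h2, hv2⟩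
          rw [hc.vert_inter, mem_singleton] at this; exact this
        rcases hv v h1 (hc.sub1.1 h2) with rfl | rfl
        · exact hmem hsH2
        · exact hmem htH2
      refine IsSP.series ?_ sp1 hS2
      refine
        { sub1 := ⟨hc.sub1.1.trans subset_union_left, ?_, ?_⟩
          sub2 := ⟨union_subset_union_left hc.sub2.1,
            union_subset_union_left (erase_subset_erase f hc.sub2.2.1), ?_⟩
          vert_union := by
            rw [subst_verts, subst_verts, ← union_assoc, hc.vert_union]
          vert_inter := ?_
          mid := hc.mid
          edge_union := ?_
          edge_disj := ?_
          src := hc.src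
          tgt := hc.tgt }
      · -- H1 edges ⊆ subst edges
        intro e h1
        exact mem_union_left _ (mem_erase.mpr
          ⟨fun h => hfH1 (h ▸ h1), hc.sub1.2.1 h1⟩)
      · -- H1 functions
        intro e h1
        have heH : e ∉ H.edges := hH1H e h1
        rw [subst_fst_not _ _ _ heH, subst_snd_not _ _ _ heH, subst_sign_not _ _ _ heH]
        exact hc.sub1.2.2 e h1
      · -- functions of subst H2 f H vs subst G f H
        intro e he
        by_cases heH : e ∈ H.edges
        · rw [subst_fst_mem _ _ _ heH, subst_fst_mem _ _ _ heH,
            subst_snd_mem _ _ _ heH, subst_snd_mem _ _ _ heH,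
            subst_sign_mem _ _ _ heH, subst_sign_mem _ _ _ heH]
          exact ⟨rfl, rfl, rfl⟩
        · have he2 : e ∈ H2.edges := by
            rcases mem_union.mp he with h | h
            · exact mem_of_mem_erase h
            · exact absurd h heH
          rw [subst_fst_not _ _ _ heH, subst_fst_not _ _ _ heH,
            subst_snd_not _ _ _ heH, subst_snd_not _ _ _ heH,
            subst_sign_not _ _ _ heH, subst_sign_not _ _ _ heH]
          exact hc.sub2.2.2 e he2
      · -- vert_inter
        show H1.verts ∩ (H2.verts ∪ H.verts) = {H1.t}
        ext v
        simp only [mem_inter, mem_union, mem_singleton]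
        constructor
        · rintro ⟨h1, h2 | hH'⟩
          · have : v ∈ H1.verts ∩ H2.verts := mem_inter.mpr ⟨h1, h2⟩
            rw [hc.vert_inter, mem_singleton] at this; exact this
          · exact hHH1 v hH' h1
        · rintro rfl
          have : H1.t ∈ H1.verts ∩ H2.verts := by
            rw [hc.vert_inter]; exact mem_singleton_self _
          exact ⟨(mem_inter.mp this).1, Or.inl (mem_inter.mp this).2⟩
      · -- edge_union
        show H1.edges ∪ (H2.edges.erase f ∪ H.edges) = G.edges.erase f ∪ H.edges
        have : G.edges.erase f = H1.edges ∪ H2.edges.erase f := by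
          rw [← hc.edge_union, erase_union_distrib, erase_eq_of_notMem hfH1]
        rw [this, union_assoc]
      · -- edge_disj
        show Disjoint H1.edges (H2.edges.erase f ∪ H.edges)
        refine disjoint_union_right.mpr ⟨hc.edge_disj.mono_right (erase_subset f _), ?_⟩
        exact disjoint_left.mpr fun e he h2 => hH1H e he h2
  | @parallel G H1 H2 hc sp1 sp2 ih1 ih2 =>
    intro f H hf hH hs ht hv hd
    have hfe := hf
    rw [← hc.edge_union, mem_union] at hfe
    rcases hfe with hf1 | hf2
    · -- f is an edge of H1
      have hfst : H1.fst f = G.fst f := (hc.sub1.2.2 f hf1).1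
      have hsnd : H1.snd f = G.snd f := (hc.sub1.2.2 f hf1).2.1
      have hS1 : IsSP (subst H1 f H) :=
        ih1 f H hf1 hH (hs.trans hfst.symm) (ht.trans hsnd.symm)
          (fun v hvH hv1 => hv v hvH (hc.sub1.1 hv1))
          (fun e heH he1 => hd e heH (hc.sub1.2.1 he1))
      have hsH1 : H.s ∈ H1.verts := by rw [hs, ← hfst]; exact H1.fst_mem f hf1
      have htH1 : H.t ∈ H1.verts := by rw [ht, ← hsnd]; exact H1.snd_mem f hf1
      have hfH2 : f ∉ H2.edges := fun h => disjoint_left.mp hc.edge_disj hf1 h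
      have hH2H : ∀ e ∈ H2.edges, e ∉ H.edges := by
        intro e h2 hh
        have := hd e hh (hc.sub2.2.1 h2)
        subst this; exact hfH2 h2
      have hHH2 : ∀ v ∈ H.verts, v ∈ H2.verts → v = H1.s ∨ v = H1.t := by
        intro v h1 h2
        have hmem : v ∈ H1.verts → v = H1.s ∨ v = H1.t := by
          intro hv1
          have : v ∈ H1.verts ∩ H2.verts := mem_inter.mpr ⟨hv1, h2⟩
          rw [hc.vert_inter] at this
          simpa using this
        rcases hv v h1 (hc.sub2.1 h2) with rfl | rfl
        · exact hmem hsH1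
        · exact hmem htH1
      refine IsSP.parallel ?_ hS1 sp2
      refine
        { sub1 := ⟨union_subset_union_left hc.sub1.1,
            union_subset_union_left (erase_subset_erase f hc.sub1.2.1), ?_⟩
          sub2 := ⟨hc.sub2.1.trans subset_union_left, ?_, ?_⟩
          vert_union := by rw [subst_verts, subst_verts, union_right_comm, hc.vert_union]
          vert_inter := ?_
          src_eq := hc.src_eq
          tgt_eq := hc.tgt_eq
          edge_union := ?_
          edge_disj := ?_
          src := hc.src
          tgt := hc.tgt }
      · intro e he
        by_cases heH : e ∈ H.edges
        · rw [subst_fst_mem _ _ _ heH, subst_fst_mem _ _ _ heH,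
            subst_snd_mem _ _ _ heH, subst_snd_mem _ _ _ heH,
            subst_sign_mem _ _ _ heH, subst_sign_mem _ _ _ heH]
          exact ⟨rfl, rfl, rfl⟩
        · have he1 : e ∈ H1.edges := by
            rcases mem_union.mp he with h | h
            · exact mem_of_mem_erase h
            · exact absurd h heH
          rw [subst_fst_not _ _ _ heH, subst_fst_not _ _ _ heH,
            subst_snd_not _ _ _ heH, subst_snd_not _ _ _ heH,
            subst_sign_not _ _ _ heH, subst_sign_not _ _ _ heH]
          exact hc.sub1.2.2 e he1
      · intro e h2
        exact mem_union_left _ (mem_erase.mpr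
          ⟨fun h => hfH2 (h ▸ h2), hc.sub2.2.1 h2⟩)
      · intro e h2
        have heH : e ∉ H.edges := hH2H e h2
        rw [subst_fst_not _ _ _ heH, subst_snd_not _ _ _ heH, subst_sign_not _ _ _ heH]
        exact hc.sub2.2.2 e h2
      · -- vert_inter
        show (H1.verts ∪ H.verts) ∩ H2.verts = {H1.s, H1.t}
        ext v
        simp only [mem_inter, mem_union, mem_insert, mem_singleton]
        constructor
        · rintro ⟨h1 | hH', h2⟩
          · have : v ∈ H1.verts ∩ H2.verts := mem_inter.mpr ⟨h1, h2⟩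
            rw [hc.vert_inter] at this
            simpa using this
          · exact hHH2 v hH' h2
        · intro hvv
          have : v ∈ H1.verts ∩ H2.verts := by
            rw [hc.vert_inter]; simpa using hvv
          exact ⟨Or.inl (mem_inter.mp this).1, (mem_inter.mp this).2⟩
      · show (H1.edges.erase f ∪ H.edges) ∪ H2.edges = G.edges.erase f ∪ H.edges
        have : G.edges.erase f = H1.edges.erase f ∪ H2.edges := by
          rw [← hc.edge_union, erase_union_distrib, erase_eq_of_notMem hfH2]
        rw [this, union_right_comm]
      · show Disjoint (H1.edges.erase f ∪ H.edges) H2.edges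
        refine disjoint_union_left.mpr ⟨hc.edge_disj.mono_left (erase_subset f _), ?_⟩
        exact disjoint_left.mpr fun e he h2 => hH2H e h2 he
    · -- f is an edge of H2: use commutativity
      have hc' := parComm hc
      have hfst : H2.fst f = G.fst f := (hc'.sub1.2.2 f hf2).1
      have hsnd : H2.snd f = G.snd f := (hc'.sub1.2.2 f hf2).2.1
      have hS2 : IsSP (subst H2 f H) :=
        ih2 f H hf2 hH (hs.trans hfst.symm) (ht.trans hsnd.symm)
          (fun v hvH hv2 => hv v hvH (hc'.sub1.1 hv2))
          (fun e heH he2 => hd e heH (hc'.sub1.2.1 he2))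
      have hsH2 : H.s ∈ H2.verts := by rw [hs, ← hfst]; exact H2.fst_mem f hf2
      have htH2 : H.t ∈ H2.verts := by rw [ht, ← hsnd]; exact H2.snd_mem f hf2
      have hfH1 : f ∉ H1.edges := fun h => disjoint_left.mp hc'.edge_disj hf2 h
      have hH1H : ∀ e ∈ H1.edges, e ∉ H.edges := by
        intro e h1 hh
        have := hd e hh (hc'.sub2.2.1 h1)
        subst this; exact hfH1 h1
      have hHH1 : ∀ v ∈ H.verts, v ∈ H1.verts → v = H2.s ∨ v = H2.t := by
        intro v h1 h2
        have hmem : v ∈ H2.verts → v = H2.s ∨ v = H2.t := by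
          intro hv2
          have : v ∈ H2.verts ∩ H1.verts := mem_inter.mpr ⟨hv2, h2⟩
          rw [hc'.vert_inter] at this
          simpa using this
        rcases hv v h1 (hc'.sub2.1 h2) with rfl | rfl
        · exact hmem hsH2
        · exact hmem htH2
      refine IsSP.parallel ?_ hS2 sp1
      refine
        { sub1 := ⟨union_subset_union_left hc'.sub1.1,
            union_subset_union_left (erase_subset_erase f hc'.sub1.2.1), ?_⟩
          sub2 := ⟨hc'.sub2.1.trans subset_union_left, ?_, ?_⟩
          vert_union := by rw [subst_verts, subst_verts, union_right_comm, hc'.vert_union]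
          vert_inter := ?_
          src_eq := hc'.src_eq
          tgt_eq := hc'.tgt_eq
          edge_union := ?_
          edge_disj := ?_
          src := hc'.src
          tgt := hc'.tgt }
      · intro e he
        by_cases heH : e ∈ H.edges
        · rw [subst_fst_mem _ _ _ heH, subst_fst_mem _ _ _ heH,
            subst_snd_mem _ _ _ heH, subst_snd_mem _ _ _ heH,
            subst_sign_mem _ _ _ heH, subst_sign_mem _ _ _ heH]
          exact ⟨rfl, rfl, rfl⟩
        · have he2 : e ∈ H2.edges := by
            rcases mem_union.mp he with h | h
            · exact mem_of_mem_erase h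
            · exact absurd h heH
          rw [subst_fst_not _ _ _ heH, subst_fst_not _ _ _ heH,
            subst_snd_not _ _ _ heH, subst_snd_not _ _ _ heH,
            subst_sign_not _ _ _ heH, subst_sign_not _ _ _ heH]
          exact hc'.sub1.2.2 e he2
      · intro e h1
        exact mem_union_left _ (mem_erase.mpr
          ⟨fun h => hfH1 (h ▸ h1), hc'.sub2.2.1 h1⟩)
      · intro e h1
        have heH : e ∉ H.edges := hH1H e h1
        rw [subst_fst_not _ _ _ heH, subst_snd_not _ _ _ heH, subst_sign_not _ _ _ heH]
        exact hc'.sub2.2.2 e h1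
      · show (H2.verts ∪ H.verts) ∩ H1.verts = {H2.s, H2.t}
        ext v
        simp only [mem_inter, mem_union, mem_insert, mem_singleton]
        constructor
        · rintro ⟨h1 | hH', h2⟩
          · have : v ∈ H2.verts ∩ H1.verts := mem_inter.mpr ⟨h1, h2⟩
            rw [hc'.vert_inter] at this
            simpa using this
          · exact hHH1 v hH' h2
        · intro hvv
          have : v ∈ H2.verts ∩ H1.verts := by
            rw [hc'.vert_inter]; simpa using hvv
          exact ⟨Or.inl (mem_inter.mp this).1, (mem_inter.mp this).2⟩
      · show (H2.edges.erase f ∪ H.edges) ∪ H1.edges = G.edges.erase f ∪ H.edges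
        have : G.edges.erase f = H2.edges.erase f ∪ H1.edges := by
          rw [← hc'.edge_union, erase_union_distrib, erase_eq_of_notMem hfH1]
        rw [this, union_right_comm]
      · show Disjoint (H2.edges.erase f ∪ H.edges) H1.edges
        refine disjoint_union_left.mpr ⟨hc'.edge_disj.mono_left (erase_subset f _), ?_⟩
        exact disjoint_left.mpr fun e he h2 => hH1H e h2 he

end SPAux

namespace SPAux

open Finset

/-- Add to the signed graph `X` a new positive edge `f` joining `a` and `b`. -/
def addEdge (X : SignedGraph) (f a b : ℕ) : SignedGraph where
  verts := insert a (insert b X.verts)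
  edges := insert f X.edges
  fst := fun e => if e = f then a else X.fst e
  snd := fun e => if e = f then b else X.snd e
  sign := fun e => if e = f then true else X.sign e
  fst_mem := by
    intro e he
    by_cases h : e = f
    · simp only [if_pos h]; exact mem_insert_self _ _
    · simp only [if_neg h]
      rcases mem_insert.mp he with h' | h'
      · exact absurd h' h
      · exact mem_insert_of_mem (mem_insert_of_mem (X.fst_mem e h'))
  snd_mem := by
    intro e he
    by_cases h : e = f
    · simp only [if_pos h]; exact mem_insert_of_mem (mem_insert_self _ _)
    · simp only [if_neg h]
      rcases mem_insert.mp he with h' | h'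
      · exact absurd h' h
      · exact mem_insert_of_mem (mem_insert_of_mem (X.snd_mem e h'))

lemma addEdge_fst_self (X : SignedGraph) (f a b : ℕ) : (addEdge X f a b).fst f = a :=
  if_pos rfl
lemma addEdge_snd_self (X : SignedGraph) (f a b : ℕ) : (addEdge X f a b).snd f = b :=
  if_pos rfl
lemma addEdge_fst_ne (X : SignedGraph) (f a b : ℕ) {e : ℕ} (h : e ≠ f) :
    (addEdge X f a b).fst e = X.fst e := if_neg h
lemma addEdge_snd_ne (X : SignedGraph) (f a b : ℕ) {e : ℕ} (h : e ≠ f) :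
    (addEdge X f a b).snd e = X.snd e := if_neg h
lemma addEdge_sign_ne (X : SignedGraph) (f a b : ℕ) {e : ℕ} (h : e ≠ f) :
    (addEdge X f a b).sign e = X.sign e := if_neg h

end SPAux

namespace SPAux

open Finset

lemma addE {G : TTGraph} (hG : IsSP G) :
    ∀ f, f ∉ G.edges → ∀ e, e ∈ G.edges → ∃ G' : TTGraph,
      G'.verts = G.verts ∧ G'.edges = insert f G.edges ∧
      G'.s = G.fst e ∧ G'.t = G.snd e ∧
      G'.fst f = G.s ∧ G'.snd f = G.t ∧
      (∀ e' ∈ G.edges, G'.fst e' = G.fst e' ∧ G'.snd e' = G.snd e' ∧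
        G'.sign e' = G.sign e') ∧
      IsSP G' := by
  induction hG with
  | @k2 G hk =>
    intro f hf e he
    obtain ⟨hV, e0, hE, hj⟩ := hk
    rw [hE, mem_singleton] at he
    subst he
    have hef : e ≠ f := fun h => hf (h ▸ by rw [hE]; exact mem_singleton_self e)
    have hvertsG' : insert G.s (insert G.t G.verts) = G.verts := by
      rw [insert_eq_self.mpr G.t_mem, insert_eq_self.mpr G.s_mem]
    -- the two pieces (as signed graphs)
    let ASG : SignedGraph :=
      ⟨{G.s, G.t}, {f}, fun _ => G.s, fun _ => G.t, fun _ => true,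
        fun _ _ => mem_insert_self _ _,
        fun _ _ => mem_insert_of_mem (mem_singleton_self _)⟩
    rcases hj with ⟨h1, h2⟩ | ⟨h1, h2⟩
    · -- fst e = G.s, snd e = G.t
      let G' : TTGraph :=
        ⟨addEdge G.toSignedGraph f G.s G.t, G.s, G.t,
          mem_insert_self _ _, mem_insert_of_mem (mem_insert_self _ _), G.s_ne_t⟩
      let A : TTGraph := ⟨ASG, G.s, G.t, mem_insert_self _ _,
        mem_insert_of_mem (mem_singleton_self _), G.s_ne_t⟩
      let B : TTGraph :=
        ⟨⟨{G.s, G.t}, {e}, G.fst, G.snd, G.sign,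
          by intro e' he'; rw [mem_singleton] at he'; subst he'
             rw [h1]; exact mem_insert_self _ _,
          by intro e' he'; rw [mem_singleton] at he'; subst he'
             rw [h2]; exact mem_insert_of_mem (mem_singleton_self _)⟩,
          G.s, G.t, mem_insert_self _ _,
          mem_insert_of_mem (mem_singleton_self _), G.s_ne_t⟩
      have hconn : IsParallelConn2 G' A B :=
        { sub1 := ⟨by show {G.s, G.t} ⊆ insert G.s (insert G.t G.verts)
                      rw [hvertsG']; rw [hV],
            by show {f} ⊆ insert f G.edges
               exact singleton_subset_iff.mpr (mem_insert_self _ _), ?_⟩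
          sub2 := ⟨by show {G.s, G.t} ⊆ insert G.s (insert G.t G.verts)
                      rw [hvertsG']; rw [hV],
            by show {e} ⊆ insert f G.edges
               rw [hE]
               exact singleton_subset_iff.mpr (mem_insert_of_mem (mem_singleton_self _)),
            ?_⟩
          vert_union := by
            show {G.s, G.t} ∪ {G.s, G.t} = insert G.s (insert G.t G.verts)
            rw [union_self, hvertsG', hV]
          vert_inter := by
            show {G.s, G.t} ∩ {G.s, G.t} = {G.s, G.t}
            rw [inter_self]
          src_eq := rfl
          tgt_eq := rfl
          edge_union := by
            show {f} ∪ {e} = insert f G.edges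
            rw [hE]; ext x; simp
          edge_disj := by
            show Disjoint {f} {e}
            rw [disjoint_singleton]
            exact fun h => hef h.symm
          src := rfl
          tgt := rfl }
      · refine ⟨G', by show insert G.s (insert G.t G.verts) = G.verts; exact hvertsG',
          rfl, h1.symm, h2.symm, addEdge_fst_self _ _ _ _, addEdge_snd_self _ _ _ _,
          ?_, ?_⟩
        · intro e' he'
          have : e' ≠ f := fun h => hf (h ▸ he')
          exact ⟨addEdge_fst_ne _ _ _ _ this, addEdge_snd_ne _ _ _ _ this,
            addEdge_sign_ne _ _ _ _ this⟩
        · exact IsSP.parallel hconn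
            (IsSP.k2 ⟨rfl, f, rfl, Or.inl ⟨rfl, rfl⟩⟩)
            (IsSP.k2 ⟨rfl, e, rfl, Or.inl ⟨h1, h2⟩⟩)
      · -- sub1 funcs
        intro e' he'
        rw [mem_singleton] at he'; subst he'
        exact ⟨(addEdge_fst_self _ _ _ _).symm, (addEdge_snd_self _ _ _ _).symm,
          (if_pos rfl).symm⟩
      · -- sub2 funcs
        intro e' he'
        rw [mem_singleton] at he'; subst he'
        exact ⟨(addEdge_fst_ne G.toSignedGraph f G.s G.t hef).symm,
          (addEdge_snd_ne G.toSignedGraph f G.s G.t hef).symm,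
          (addEdge_sign_ne G.toSignedGraph f G.s G.t hef).symm⟩
    · -- fst e = G.t, snd e = G.s
      let G' : TTGraph :=
        ⟨addEdge G.toSignedGraph f G.s G.t, G.t, G.s,
          mem_insert_of_mem (mem_insert_self _ _), mem_insert_self _ _, G.s_ne_t.symm⟩
      let A : TTGraph := ⟨ASG, G.t, G.s,
        mem_insert_of_mem (mem_singleton_self _), mem_insert_self _ _, G.s_ne_t.symm⟩
      let B : TTGraph :=
        ⟨⟨{G.s, G.t}, {e}, G.fst, G.snd, G.sign,
          by intro e' he'; rw [mem_singleton] at he'; subst he'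
             rw [h1]; exact mem_insert_of_mem (mem_singleton_self _),
          by intro e' he'; rw [mem_singleton] at he'; subst he'
             rw [h2]; exact mem_insert_self _ _⟩,
          G.t, G.s, mem_insert_of_mem (mem_singleton_self _),
          mem_insert_self _ _, G.s_ne_t.symm⟩
      have hconn : IsParallelConn2 G' A B :=
        { sub1 := ⟨by show {G.s, G.t} ⊆ insert G.s (insert G.t G.verts)
                      rw [hvertsG']; rw [hV],
            by show {f} ⊆ insert f G.edges
               exact singleton_subset_iff.mpr (mem_insert_self _ _), ?_⟩
          sub2 := ⟨by show {G.s, G.t} ⊆ insert G.s (insert G.t G.verts)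
                      rw [hvertsG']; rw [hV],
            by show {e} ⊆ insert f G.edges
               rw [hE]
               exact singleton_subset_iff.mpr (mem_insert_of_mem (mem_singleton_self _)),
            ?_⟩
          vert_union := by
            show {G.s, G.t} ∪ {G.s, G.t} = insert G.s (insert G.t G.verts)
            rw [union_self, hvertsG', hV]
          vert_inter := by
            show {G.s, G.t} ∩ {G.s, G.t} = {G.t, G.s}
            rw [inter_self, pair_comm]
          src_eq := rfl
          tgt_eq := rfl
          edge_union := by
            show {f} ∪ {e} = insert f G.edges
            rw [hE]; ext x; simp
          edge_disj := by
            show Disjoint {f} {e}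
            rw [disjoint_singleton]
            exact fun h => hef h.symm
          src := rfl
          tgt := rfl }
      · refine ⟨G', by show insert G.s (insert G.t G.verts) = G.verts; exact hvertsG',
          rfl, h1.symm, h2.symm, addEdge_fst_self _ _ _ _, addEdge_snd_self _ _ _ _,
          ?_, ?_⟩
        · intro e' he'
          have : e' ≠ f := fun h => hf (h ▸ he')
          exact ⟨addEdge_fst_ne _ _ _ _ this, addEdge_snd_ne _ _ _ _ this,
            addEdge_sign_ne _ _ _ _ this⟩
        · exact IsSP.parallel hconn
            (IsSP.k2 ⟨by show ({G.s, G.t} : Finset ℕ) = {G.t, G.s}; rw [pair_comm],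
              f, rfl, Or.inr ⟨rfl, rfl⟩⟩)
            (IsSP.k2 ⟨by show ({G.s, G.t} : Finset ℕ) = {G.t, G.s}; rw [pair_comm],
              e, rfl, Or.inl ⟨h1, h2⟩⟩)
      · intro e' he'
        rw [mem_singleton] at he'; subst he'
        exact ⟨(addEdge_fst_self _ _ _ _).symm, (addEdge_snd_self _ _ _ _).symm,
          (if_pos rfl).symm⟩
      · intro e' he'
        rw [mem_singleton] at he'; subst he'
        exact ⟨(addEdge_fst_ne G.toSignedGraph f G.s G.t hef).symm,
          (addEdge_snd_ne G.toSignedGraph f G.s G.t hef).symm,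
          (addEdge_sign_ne G.toSignedGraph f G.s G.t hef).symm⟩
  | @series G H1 H2 hc sp1 sp2 ih1 ih2 =>
    intro f hf e he
    rw [← hc.edge_union, mem_union] at he
    have hGsH1 : G.s ∈ H1.verts := by rw [hc.src]; exact H1.s_mem
    have hGtH2 : G.t ∈ H2.verts := by rw [hc.tgt]; exact H2.t_mem
    have hGsnotH2 : G.s ∉ H2.verts := by
      intro h
      have h' : G.s ∈ H1.verts ∩ H2.verts := mem_inter.mpr ⟨hGsH1, h⟩
      rw [hc.vert_inter, mem_singleton] at h'
      exact H1.s_ne_t (hc.src.symm.trans h')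
    have hGtnotH1 : G.t ∉ H1.verts := by
      intro h
      have h' : G.t ∈ H1.verts ∩ H2.verts := mem_inter.mpr ⟨h, hGtH2⟩
      rw [hc.vert_inter, mem_singleton] at h'
      exact H2.s_ne_t ((hc.mid.symm.trans h'.symm).trans hc.tgt)
    have hf1 : f ∉ H1.edges := fun h => hf (hc.sub1.2.1 h)
    have hfH2 : f ∉ H2.edges := fun h => hf (hc.sub2.2.1 h)
    rcases he with he1 | he2
    · -- e is an edge of H1
      obtain ⟨G1, gv, ge, gs, gt, gff, gfs, gfuns, gsp⟩ := ih1 f hf1 e he1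
      let K : TTGraph :=
        ⟨addEdge H2.toSignedGraph f G.s G.t, G.s, H2.s,
          mem_insert_self _ _,
          mem_insert_of_mem (mem_insert_of_mem H2.s_mem),
          by rw [hc.src, ← hc.mid]; exact H1.s_ne_t⟩
      let F : TTGraph :=
        ⟨⟨{G.s, G.t}, {f}, fun _ => G.s, fun _ => G.t, fun _ => true,
          fun _ _ => mem_insert_self _ _,
          fun _ _ => mem_insert_of_mem (mem_singleton_self _)⟩,
          G.s, G.t, mem_insert_self _ _,
          mem_insert_of_mem (mem_singleton_self _), G.s_ne_t⟩
      have hFsp : IsSP F := IsSP.k2 ⟨rfl, f, rfl, Or.inl ⟨rfl, rfl⟩⟩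
      have hKconn : IsSeriesConn2 K F (rev H2) :=
        { sub1 := ⟨by
              intro v hv
              rcases mem_insert.mp hv with rfl | hv'
              · exact mem_insert_self _ _
              · rw [mem_singleton] at hv'; subst hv'
                exact mem_insert_of_mem (mem_insert_self _ _),
            singleton_subset_iff.mpr (mem_insert_self _ _),
            by
              intro e' he'
              rw [mem_singleton] at he'; subst he'
              exact ⟨(addEdge_fst_self _ _ _ _).symm, (addEdge_snd_self _ _ _ _).symm,
                (if_pos rfl).symm⟩⟩
          sub2 := ⟨fun _ hv => mem_insert_of_mem (mem_insert_of_mem hv),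
            subset_insert _ _,
            by
              intro e' he'
              have hne : e' ≠ f := fun h => hfH2 (h ▸ he')
              exact ⟨(addEdge_fst_ne H2.toSignedGraph f G.s G.t hne).symm,
                (addEdge_snd_ne H2.toSignedGraph f G.s G.t hne).symm,
                (addEdge_sign_ne H2.toSignedGraph f G.s G.t hne).symm⟩⟩
          vert_union := by
            show {G.s, G.t} ∪ H2.verts = insert G.s (insert G.t H2.verts)
            ext v; simp only [mem_union, mem_insert, mem_singleton]; tauto
          vert_inter := by
            show {G.s, G.t} ∩ H2.verts = {G.t}
            ext v
            simp only [mem_inter, mem_insert, mem_singleton]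
            constructor
            · rintro ⟨rfl | rfl, h2⟩
              · exact absurd h2 hGsnotH2
              · rfl
            · rintro rfl
              exact ⟨Or.inr rfl, hGtH2⟩
          mid := hc.tgt
          edge_union := by
            show {f} ∪ H2.edges = insert f H2.edges
            ext x; simp
          edge_disj := by
            show Disjoint {f} H2.edges
            exact disjoint_left.mpr fun x hx hx' => hfH2 ((mem_singleton.mp hx) ▸ hx')
          src := rfl
          tgt := rfl }
      have hKsp : IsSP K := IsSP.series hKconn hFsp (IsSP_rev sp2)
      have hfG1 : f ∈ G1.edges := by rw [ge]; exact mem_insert_self _ _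
      have hRsp : IsSP (subst G1 f K) := by
        refine subst_SP gsp f K hfG1 hKsp ?_ ?_ ?_ ?_
        · show G.s = G1.fst f
          rw [gff]; exact hc.src
        · show H2.s = G1.snd f
          rw [gfs]; exact hc.mid.symm
        · intro v hvK hvG1
          rw [gv] at hvG1
          rcases mem_insert.mp hvK with rfl | hv'
          · exact Or.inl rfl
          rcases mem_insert.mp hv' with rfl | hv''
          · exact absurd hvG1 hGtnotH1
          · refine Or.inr ?_
            have h' : v ∈ H1.verts ∩ H2.verts := mem_inter.mpr ⟨hvG1, hv''⟩
            rw [hc.vert_inter, mem_singleton] at h'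
            show v = H2.s
            rw [← hc.mid]; exact h'
        · intro e' heK heG1
          by_cases h : e' = f
          · exact h
          · rw [ge] at heG1
            have h1 : e' ∈ H1.edges := by
              rcases mem_insert.mp heG1 with h' | h'
              · exact absurd h' h
              · exact h'
            have h2 : e' ∈ H2.edges := by
              rcases mem_insert.mp heK with h' | h'
              · exact absurd h' h
              · exact h'
            exact absurd h2 fun hx => disjoint_left.mp hc.edge_disj h1 hx
      refine ⟨subst G1 f K, ?_, ?_, ?_, ?_, ?_, ?_, ?_, hRsp⟩
      · show G1.verts ∪ K.verts = G.verts
        rw [gv, ← hc.vert_union]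
        show H1.verts ∪ insert G.s (insert G.t H2.verts) = H1.verts ∪ H2.verts
        ext v
        simp only [mem_union, mem_insert]
        constructor
        · rintro (h | rfl | rfl | h)
          · exact Or.inl h
          · exact Or.inl hGsH1
          · exact Or.inr hGtH2
          · exact Or.inr h
        · rintro (h | h)
          · exact Or.inl h
          · exact Or.inr (Or.inr (Or.inr h))
      · show G1.edges.erase f ∪ K.edges = insert f G.edges
        rw [ge, erase_insert hf1]
        show H1.edges ∪ insert f H2.edges = insert f G.edges
        rw [union_insert, hc.edge_union]
      · show G1.s = G.fst e
        rw [gs]; exact (hc.sub1.2.2 e he1).1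
      · show G1.t = G.snd e
        rw [gt]; exact (hc.sub1.2.2 e he1).2.1
      · have hfK : f ∈ K.edges := mem_insert_self _ _
        rw [subst_fst_mem _ _ _ hfK]
        exact addEdge_fst_self _ _ _ _
      · have hfK : f ∈ K.edges := mem_insert_self _ _
        rw [subst_snd_mem _ _ _ hfK]
        exact addEdge_snd_self _ _ _ _
      · intro e' he'
        have hne : e' ≠ f := fun h => hf (h ▸ he')
        rw [← hc.edge_union, mem_union] at he'
        rcases he' with h1' | h2'
        · have hK : e' ∉ K.edges := by
            intro h
            rcases mem_insert.mp h with h' | h'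
            · exact hne h'
            · exact disjoint_left.mp hc.edge_disj h1' h'
          rw [subst_fst_not _ _ _ hK, subst_snd_not _ _ _ hK, subst_sign_not _ _ _ hK]
          obtain ⟨a1, a2, a3⟩ := gfuns e' h1'
          obtain ⟨b1, b2, b3⟩ := hc.sub1.2.2 e' h1'
          exact ⟨a1.trans b1, a2.trans b2, a3.trans b3⟩
        · have hK : e' ∈ K.edges := mem_insert_of_mem h2'
          rw [subst_fst_mem _ _ _ hK, subst_snd_mem _ _ _ hK, subst_sign_mem _ _ _ hK]
          exact ⟨(addEdge_fst_ne H2.toSignedGraph f G.s G.t hne).trans (hc.sub2.2.2 e' h2').1,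
            (addEdge_snd_ne H2.toSignedGraph f G.s G.t hne).trans (hc.sub2.2.2 e' h2').2.1,
            (addEdge_sign_ne H2.toSignedGraph f G.s G.t hne).trans (hc.sub2.2.2 e' h2').2.2⟩
    · -- e is an edge of H2
      obtain ⟨G2, gv, ge, gs, gt, gff, gfs, gfuns, gsp⟩ := ih2 f hfH2 e he2
      let K : TTGraph :=
        ⟨addEdge H1.toSignedGraph f G.s G.t, H1.t, G.t,
          mem_insert_of_mem (mem_insert_of_mem H1.t_mem),
          mem_insert_of_mem (mem_insert_self _ _),
          fun h => hGtnotH1 (h ▸ H1.t_mem)⟩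
      let F : TTGraph :=
        ⟨⟨{G.s, G.t}, {f}, fun _ => G.s, fun _ => G.t, fun _ => true,
          fun _ _ => mem_insert_self _ _,
          fun _ _ => mem_insert_of_mem (mem_singleton_self _)⟩,
          G.s, G.t, mem_insert_self _ _,
          mem_insert_of_mem (mem_singleton_self _), G.s_ne_t⟩
      have hFsp : IsSP F := IsSP.k2 ⟨rfl, f, rfl, Or.inl ⟨rfl, rfl⟩⟩
      have hKconn : IsSeriesConn2 K (rev H1) F :=
        { sub1 := ⟨fun _ hv => mem_insert_of_mem (mem_insert_of_mem hv),
            subset_insert _ _,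
            by
              intro e' he'
              have hne : e' ≠ f := fun h => hf1 (h ▸ he')
              exact ⟨(addEdge_fst_ne H1.toSignedGraph f G.s G.t hne).symm,
                (addEdge_snd_ne H1.toSignedGraph f G.s G.t hne).symm,
                (addEdge_sign_ne H1.toSignedGraph f G.s G.t hne).symm⟩⟩
          sub2 := ⟨by
              intro v hv
              rcases mem_insert.mp hv with rfl | hv'
              · exact mem_insert_self _ _
              · rw [mem_singleton] at hv'; subst hv'
                exact mem_insert_of_mem (mem_insert_self _ _),
            singleton_subset_iff.mpr (mem_insert_self _ _),
            by
              intro e' he'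
              rw [mem_singleton] at he'; subst he'
              exact ⟨(addEdge_fst_self _ _ _ _).symm, (addEdge_snd_self _ _ _ _).symm,
                (if_pos rfl).symm⟩⟩
          vert_union := by
            show H1.verts ∪ {G.s, G.t} = insert G.s (insert G.t H1.verts)
            ext v; simp only [mem_union, mem_insert, mem_singleton]; tauto
          vert_inter := by
            show H1.verts ∩ {G.s, G.t} = {H1.s}
            ext v
            simp only [mem_inter, mem_insert, mem_singleton]
            constructor
            · rintro ⟨h1, rfl | rfl⟩
              · exact hc.src
              · exact absurd h1 hGtnotH1
            · rintro rfl
              exact ⟨H1.s_mem, Or.inl hc.src.symm⟩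
          mid := hc.src.symm
          edge_union := by
            show H1.edges ∪ {f} = insert f H1.edges
            ext x; simp only [mem_union, mem_insert, mem_singleton]; tauto
          edge_disj := disjoint_left.mpr fun x hx hx' => hf1 ((mem_singleton.mp hx') ▸ hx)
          src := rfl
          tgt := rfl }
      have hKsp : IsSP K := IsSP.series hKconn (IsSP_rev sp1) hFsp
      have hfG2 : f ∈ G2.edges := by rw [ge]; exact mem_insert_self _ _
      have hRsp : IsSP (subst G2 f K) := by
        refine subst_SP gsp f K hfG2 hKsp ?_ ?_ ?_ ?_
        · show H1.t = G2.fst f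
          rw [gff]; exact hc.mid
        · show G.t = G2.snd f
          rw [gfs]; exact hc.tgt
        · intro v hvK hvG2
          rw [gv] at hvG2
          rcases mem_insert.mp hvK with rfl | hv'
          · exact absurd hvG2 hGsnotH2
          rcases mem_insert.mp hv' with rfl | hv''
          · exact Or.inr rfl
          · refine Or.inl ?_
            have h' : v ∈ H1.verts ∩ H2.verts := mem_inter.mpr ⟨hv'', hvG2⟩
            rw [hc.vert_inter, mem_singleton] at h'
            exact h'
        · intro e' heK heG2
          by_cases h : e' = f
          · exact h
          · rw [ge] at heG2
            have h2' : e' ∈ H2.edges := by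
              rcases mem_insert.mp heG2 with h' | h'
              · exact absurd h' h
              · exact h'
            have h1' : e' ∈ H1.edges := by
              rcases mem_insert.mp heK with h' | h'
              · exact absurd h' h
              · exact h'
            exact absurd h2' fun hx => disjoint_left.mp hc.edge_disj h1' hx
      refine ⟨subst G2 f K, ?_, ?_, ?_, ?_, ?_, ?_, ?_, hRsp⟩
      · show G2.verts ∪ K.verts = G.verts
        rw [gv, ← hc.vert_union]
        show H2.verts ∪ insert G.s (insert G.t H1.verts) = H1.verts ∪ H2.verts
        ext v
        simp only [mem_union, mem_insert]
        constructor
        · rintro (h | rfl | rfl | h)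
          · exact Or.inr h
          · exact Or.inl hGsH1
          · exact Or.inr hGtH2
          · exact Or.inl h
        · rintro (h | h)
          · exact Or.inr (Or.inr (Or.inr h))
          · exact Or.inl h
      · show G2.edges.erase f ∪ K.edges = insert f G.edges
        rw [ge, erase_insert hfH2]
        show H2.edges ∪ insert f H1.edges = insert f G.edges
        rw [union_insert, union_comm H2.edges H1.edges, hc.edge_union]
      · show G2.s = G.fst e
        rw [gs]; exact (hc.sub2.2.2 e he2).1
      · show G2.t = G.snd e
        rw [gt]; exact (hc.sub2.2.2 e he2).2.1
      · have hfK : f ∈ K.edges := mem_insert_self _ _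
        rw [subst_fst_mem _ _ _ hfK]
        exact addEdge_fst_self _ _ _ _
      · have hfK : f ∈ K.edges := mem_insert_self _ _
        rw [subst_snd_mem _ _ _ hfK]
        exact addEdge_snd_self _ _ _ _
      · intro e' he'
        have hne : e' ≠ f := fun h => hf (h ▸ he')
        rw [← hc.edge_union, mem_union] at he'
        rcases he' with h1' | h2'
        · have hK : e' ∈ K.edges := mem_insert_of_mem h1'
          rw [subst_fst_mem _ _ _ hK, subst_snd_mem _ _ _ hK, subst_sign_mem _ _ _ hK]
          exact ⟨(addEdge_fst_ne H1.toSignedGraph f G.s G.t hne).trans (hc.sub1.2.2 e' h1').1,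
            (addEdge_snd_ne H1.toSignedGraph f G.s G.t hne).trans (hc.sub1.2.2 e' h1').2.1,
            (addEdge_sign_ne H1.toSignedGraph f G.s G.t hne).trans (hc.sub1.2.2 e' h1').2.2⟩
        · have hK : e' ∉ K.edges := by
            intro h
            rcases mem_insert.mp h with h' | h'
            · exact hne h'
            · exact disjoint_left.mp hc.edge_disj h' h2'
          rw [subst_fst_not _ _ _ hK, subst_snd_not _ _ _ hK, subst_sign_not _ _ _ hK]
          obtain ⟨a1, a2, a3⟩ := gfuns e' h2'
          obtain ⟨b1, b2, b3⟩ := hc.sub2.2.2 e' h2'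
          exact ⟨a1.trans b1, a2.trans b2, a3.trans b3⟩
  | @parallel G H1 H2 hc sp1 sp2 ih1 ih2 =>
    intro f hf e he
    rw [← hc.edge_union, mem_union] at he
    have hf1 : f ∉ H1.edges := fun h => hf (hc.sub1.2.1 h)
    have hfH2 : f ∉ H2.edges := fun h => hf (hc.sub2.2.1 h)
    rcases he with he1 | he2
    ·
      obtain ⟨G1, gv, ge, gs, gt, gff, gfs, gfuns, gsp⟩ := ih1 f hf1 e he1
      let K : TTGraph :=
        ⟨addEdge H2.toSignedGraph f G.s G.t, H1.s, H1.t,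
          by rw [← hc.src]; exact mem_insert_self _ _,
          by rw [← hc.tgt]; exact mem_insert_of_mem (mem_insert_self _ _),
          H1.s_ne_t⟩
      let YC : TTGraph :=
        ⟨H2.toSignedGraph, H1.s, H1.t,
          by rw [hc.src_eq]; exact H2.s_mem,
          by rw [hc.tgt_eq]; exact H2.t_mem, H1.s_ne_t⟩
      have hYCsp : IsSP YC :=
        sp_congr sp2 YC rfl rfl hc.src_eq hc.tgt_eq (fun e' _ => ⟨rfl, rfl, rfl⟩)
      let F : TTGraph :=
        ⟨⟨{G.s, G.t}, {f}, fun _ => G.s, fun _ => G.t, fun _ => true,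
          fun _ _ => mem_insert_self _ _,
          fun _ _ => mem_insert_of_mem (mem_singleton_self _)⟩,
          H1.s, H1.t,
          by rw [← hc.src]; exact mem_insert_self _ _,
          by rw [← hc.tgt]; exact mem_insert_of_mem (mem_singleton_self _),
          H1.s_ne_t⟩
      have hFsp : IsSP F :=
        IsSP.k2 ⟨by show ({G.s, G.t} : Finset ℕ) = {H1.s, H1.t}; rw [hc.src, hc.tgt],
          f, rfl, Or.inl ⟨hc.src, hc.tgt⟩⟩
      have hKconn : IsParallelConn2 K YC F :=
        { sub1 := ⟨fun _ hv => mem_insert_of_mem (mem_insert_of_mem hv),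
            subset_insert _ _,
            by
              intro e' he'
              have hne : e' ≠ f := fun h => hfH2 (h ▸ he')
              exact ⟨(addEdge_fst_ne H2.toSignedGraph f G.s G.t hne).symm,
                (addEdge_snd_ne H2.toSignedGraph f G.s G.t hne).symm,
                (addEdge_sign_ne H2.toSignedGraph f G.s G.t hne).symm⟩⟩
          sub2 := ⟨by
              intro v hv
              rcases mem_insert.mp hv with rfl | hv'
              · exact mem_insert_self _ _
              · rw [mem_singleton] at hv'; subst hv'
                exact mem_insert_of_mem (mem_insert_self _ _),
            singleton_subset_iff.mpr (mem_insert_self _ _),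
            by
              intro e' he'
              rw [mem_singleton] at he'; subst he'
              exact ⟨(addEdge_fst_self _ _ _ _).symm, (addEdge_snd_self _ _ _ _).symm,
                (if_pos rfl).symm⟩⟩
          vert_union := by
            show H2.verts ∪ {G.s, G.t} = insert G.s (insert G.t H2.verts)
            ext v; simp only [mem_union, mem_insert, mem_singleton]; tauto
          vert_inter := by
            show H2.verts ∩ {G.s, G.t} = {H1.s, H1.t}
            rw [hc.src, hc.tgt, inter_eq_right]
            exact insert_subset_iff.mpr ⟨by rw [hc.src_eq]; exact H2.s_mem,
              singleton_subset_iff.mpr (by rw [hc.tgt_eq]; exact H2.t_mem)⟩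
          src_eq := rfl
          tgt_eq := rfl
          edge_union := by
            show H2.edges ∪ {f} = insert f H2.edges
            ext x; simp only [mem_union, mem_insert, mem_singleton]; tauto
          edge_disj := disjoint_left.mpr fun x hx hx' => hfH2 ((mem_singleton.mp hx') ▸ hx)
          src := rfl
          tgt := rfl }
      have hKsp : IsSP K := IsSP.parallel hKconn hYCsp hFsp
      have hfG1 : f ∈ G1.edges := by rw [ge]; exact mem_insert_self _ _
      have hRsp : IsSP (subst G1 f K) := by
        refine subst_SP gsp f K hfG1 hKsp ?_ ?_ ?_ ?_
        · show H1.s = G1.fst f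
          rw [gff]
        · show H1.t = G1.snd f
          rw [gfs]
        · intro v hvK hvG1
          rw [gv] at hvG1
          rcases mem_insert.mp hvK with rfl | hv'
          · exact Or.inl hc.src
          rcases mem_insert.mp hv' with rfl | hv''
          · exact Or.inr hc.tgt
          · have h' : v ∈ H1.verts ∩ H2.verts := mem_inter.mpr ⟨hvG1, hv''⟩
            rw [hc.vert_inter] at h'
            rcases mem_insert.mp h' with h'' | h''
            · exact Or.inl h''
            · exact Or.inr (mem_singleton.mp h'')
        · intro e' heK heG1
          by_cases h : e' = f
          · exact h
          · rw [ge] at heG1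
            have h1 : e' ∈ H1.edges := by
              rcases mem_insert.mp heG1 with h' | h'
              · exact absurd h' h
              · exact h'
            have h2 : e' ∈ H2.edges := by
              rcases mem_insert.mp heK with h' | h'
              · exact absurd h' h
              · exact h'
            exact absurd h2 fun hx => disjoint_left.mp hc.edge_disj h1 hx
      refine ⟨subst G1 f K, ?_, ?_, ?_, ?_, ?_, ?_, ?_, hRsp⟩
      · show G1.verts ∪ K.verts = G.verts
        rw [gv, ← hc.vert_union]
        show H1.verts ∪ insert G.s (insert G.t H2.verts) = H1.verts ∪ H2.verts
        ext v
        simp only [mem_union, mem_insert]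
        constructor
        · rintro (h | rfl | rfl | h)
          · exact Or.inl h
          · exact Or.inl (by rw [hc.src]; exact H1.s_mem)
          · exact Or.inl (by rw [hc.tgt]; exact H1.t_mem)
          · exact Or.inr h
        · rintro (h | h)
          · exact Or.inl h
          · exact Or.inr (Or.inr (Or.inr h))
      · show G1.edges.erase f ∪ K.edges = insert f G.edges
        rw [ge, erase_insert hf1]
        show H1.edges ∪ insert f H2.edges = insert f G.edges
        rw [union_insert, hc.edge_union]
      · show G1.s = G.fst e
        rw [gs]; exact (hc.sub1.2.2 e he1).1
      · show G1.t = G.snd e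
        rw [gt]; exact (hc.sub1.2.2 e he1).2.1
      · have hfK : f ∈ K.edges := mem_insert_self _ _
        rw [subst_fst_mem _ _ _ hfK]
        exact addEdge_fst_self _ _ _ _
      · have hfK : f ∈ K.edges := mem_insert_self _ _
        rw [subst_snd_mem _ _ _ hfK]
        exact addEdge_snd_self _ _ _ _
      · intro e' he'
        have hne : e' ≠ f := fun h => hf (h ▸ he')
        rw [← hc.edge_union, mem_union] at he'
        rcases he' with h1' | h2'
        · have hK : e' ∉ K.edges := by
            intro h
            rcases mem_insert.mp h with h' | h'
            · exact hne h'
            · exact disjoint_left.mp hc.edge_disj h1' h'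
          rw [subst_fst_not _ _ _ hK, subst_snd_not _ _ _ hK, subst_sign_not _ _ _ hK]
          obtain ⟨a1, a2, a3⟩ := gfuns e' h1'
          obtain ⟨b1, b2, b3⟩ := hc.sub1.2.2 e' h1'
          exact ⟨a1.trans b1, a2.trans b2, a3.trans b3⟩
        · have hK : e' ∈ K.edges := mem_insert_of_mem h2'
          rw [subst_fst_mem _ _ _ hK, subst_snd_mem _ _ _ hK, subst_sign_mem _ _ _ hK]
          exact ⟨(addEdge_fst_ne H2.toSignedGraph f G.s G.t hne).trans (hc.sub2.2.2 e' h2').1,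
            (addEdge_snd_ne H2.toSignedGraph f G.s G.t hne).trans (hc.sub2.2.2 e' h2').2.1,
            (addEdge_sign_ne H2.toSignedGraph f G.s G.t hne).trans (hc.sub2.2.2 e' h2').2.2⟩
    · have hc' := parComm hc
      obtain ⟨G1, gv, ge, gs, gt, gff, gfs, gfuns, gsp⟩ := ih2 f hfH2 e he2
      let K : TTGraph :=
        ⟨addEdge H1.toSignedGraph f G.s G.t, H2.s, H2.t,
          by rw [← hc'.src]; exact mem_insert_self _ _,
          by rw [← hc'.tgt]; exact mem_insert_of_mem (mem_insert_self _ _),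
          H2.s_ne_t⟩
      let YC : TTGraph :=
        ⟨H1.toSignedGraph, H2.s, H2.t,
          by rw [hc'.src_eq]; exact H1.s_mem,
          by rw [hc'.tgt_eq]; exact H1.t_mem, H2.s_ne_t⟩
      have hYCsp : IsSP YC :=
        sp_congr sp1 YC rfl rfl hc'.src_eq hc'.tgt_eq (fun e' _ => ⟨rfl, rfl, rfl⟩)
      let F : TTGraph :=
        ⟨⟨{G.s, G.t}, {f}, fun _ => G.s, fun _ => G.t, fun _ => true,
          fun _ _ => mem_insert_self _ _,
          fun _ _ => mem_insert_of_mem (mem_singleton_self _)⟩,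
          H2.s, H2.t,
          by rw [← hc'.src]; exact mem_insert_self _ _,
          by rw [← hc'.tgt]; exact mem_insert_of_mem (mem_singleton_self _),
          H2.s_ne_t⟩
      have hFsp : IsSP F :=
        IsSP.k2 ⟨by show ({G.s, G.t} : Finset ℕ) = {H2.s, H2.t}; rw [hc'.src, hc'.tgt],
          f, rfl, Or.inl ⟨hc'.src, hc'.tgt⟩⟩
      have hKconn : IsParallelConn2 K YC F :=
        { sub1 := ⟨fun _ hv => mem_insert_of_mem (mem_insert_of_mem hv),
            subset_insert _ _,
            by
              intro e' he'
              have hne : e' ≠ f := fun h => hf1 (h ▸ he')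
              exact ⟨(addEdge_fst_ne H1.toSignedGraph f G.s G.t hne).symm,
                (addEdge_snd_ne H1.toSignedGraph f G.s G.t hne).symm,
                (addEdge_sign_ne H1.toSignedGraph f G.s G.t hne).symm⟩⟩
          sub2 := ⟨by
              intro v hv
              rcases mem_insert.mp hv with rfl | hv'
              · exact mem_insert_self _ _
              · rw [mem_singleton] at hv'; subst hv'
                exact mem_insert_of_mem (mem_insert_self _ _),
            singleton_subset_iff.mpr (mem_insert_self _ _),
            by
              intro e' he'
              rw [mem_singleton] at he'; subst he'
              exact ⟨(addEdge_fst_self _ _ _ _).symm, (addEdge_snd_self _ _ _ _).symm,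
                (if_pos rfl).symm⟩⟩
          vert_union := by
            show H1.verts ∪ {G.s, G.t} = insert G.s (insert G.t H1.verts)
            ext v; simp only [mem_union, mem_insert, mem_singleton]; tauto
          vert_inter := by
            show H1.verts ∩ {G.s, G.t} = {H2.s, H2.t}
            rw [hc'.src, hc'.tgt, inter_eq_right]
            exact insert_subset_iff.mpr ⟨by rw [hc'.src_eq]; exact H1.s_mem,
              singleton_subset_iff.mpr (by rw [hc'.tgt_eq]; exact H1.t_mem)⟩
          src_eq := rfl
          tgt_eq := rfl
          edge_union := by
            show H1.edges ∪ {f} = insert f H1.edges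
            ext x; simp only [mem_union, mem_insert, mem_singleton]; tauto
          edge_disj := disjoint_left.mpr fun x hx hx' => hf1 ((mem_singleton.mp hx') ▸ hx)
          src := rfl
          tgt := rfl }
      have hKsp : IsSP K := IsSP.parallel hKconn hYCsp hFsp
      have hfG1 : f ∈ G1.edges := by rw [ge]; exact mem_insert_self _ _
      have hRsp : IsSP (subst G1 f K) := by
        refine subst_SP gsp f K hfG1 hKsp ?_ ?_ ?_ ?_
        · show H2.s = G1.fst f
          rw [gff]
        · show H2.t = G1.snd f
          rw [gfs]
        · intro v hvK hvG1
          rw [gv] at hvG1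
          rcases mem_insert.mp hvK with rfl | hv'
          · exact Or.inl hc'.src
          rcases mem_insert.mp hv' with rfl | hv''
          · exact Or.inr hc'.tgt
          · have h' : v ∈ H2.verts ∩ H1.verts := mem_inter.mpr ⟨hvG1, hv''⟩
            rw [hc'.vert_inter] at h'
            rcases mem_insert.mp h' with h'' | h''
            · exact Or.inl h''
            · exact Or.inr (mem_singleton.mp h'')
        · intro e' heK heG1
          by_cases h : e' = f
          · exact h
          · rw [ge] at heG1
            have h1 : e' ∈ H2.edges := by
              rcases mem_insert.mp heG1 with h' | h'
              · exact absurd h' h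
              · exact h'
            have h2 : e' ∈ H1.edges := by
              rcases mem_insert.mp heK with h' | h'
              · exact absurd h' h
              · exact h'
            exact absurd h2 fun hx => disjoint_left.mp hc'.edge_disj h1 hx
      refine ⟨subst G1 f K, ?_, ?_, ?_, ?_, ?_, ?_, ?_, hRsp⟩
      · show G1.verts ∪ K.verts = G.verts
        rw [gv, ← hc'.vert_union]
        show H2.verts ∪ insert G.s (insert G.t H1.verts) = H2.verts ∪ H1.verts
        ext v
        simp only [mem_union, mem_insert]
        constructor
        · rintro (h | rfl | rfl | h)
          · exact Or.inl h
          · exact Or.inl (by rw [hc'.src]; exact H2.s_mem)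
          · exact Or.inl (by rw [hc'.tgt]; exact H2.t_mem)
          · exact Or.inr h
        · rintro (h | h)
          · exact Or.inl h
          · exact Or.inr (Or.inr (Or.inr h))
      · show G1.edges.erase f ∪ K.edges = insert f G.edges
        rw [ge, erase_insert hfH2]
        show H2.edges ∪ insert f H1.edges = insert f G.edges
        rw [union_insert, hc'.edge_union]
      · show G1.s = G.fst e
        rw [gs]; exact (hc'.sub1.2.2 e he2).1
      · show G1.t = G.snd e
        rw [gt]; exact (hc'.sub1.2.2 e he2).2.1
      · have hfK : f ∈ K.edges := mem_insert_self _ _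
        rw [subst_fst_mem _ _ _ hfK]
        exact addEdge_fst_self _ _ _ _
      · have hfK : f ∈ K.edges := mem_insert_self _ _
        rw [subst_snd_mem _ _ _ hfK]
        exact addEdge_snd_self _ _ _ _
      · intro e' he'
        have hne : e' ≠ f := fun h => hf (h ▸ he')
        rw [← hc'.edge_union, mem_union] at he'
        rcases he' with h1' | h2'
        · have hK : e' ∉ K.edges := by
            intro h
            rcases mem_insert.mp h with h' | h'
            · exact hne h'
            · exact disjoint_left.mp hc'.edge_disj h1' h'
          rw [subst_fst_not _ _ _ hK, subst_snd_not _ _ _ hK, subst_sign_not _ _ _ hK]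
          obtain ⟨a1, a2, a3⟩ := gfuns e' h1'
          obtain ⟨b1, b2, b3⟩ := hc'.sub1.2.2 e' h1'
          exact ⟨a1.trans b1, a2.trans b2, a3.trans b3⟩
        · have hK : e' ∈ K.edges := mem_insert_of_mem h2'
          rw [subst_fst_mem _ _ _ hK, subst_snd_mem _ _ _ hK, subst_sign_mem _ _ _ hK]
          exact ⟨(addEdge_fst_ne H1.toSignedGraph f G.s G.t hne).trans (hc'.sub2.2.2 e' h2').1,
            (addEdge_snd_ne H1.toSignedGraph f G.s G.t hne).trans (hc'.sub2.2.2 e' h2').2.1,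
            (addEdge_sign_ne H1.toSignedGraph f G.s G.t hne).trans (hc'.sub2.2.2 e' h2').2.2⟩

end SPAux

namespace SPAux

open Finset

lemma series_not_two {G H1 H2 : TTGraph} (hc : IsSeriesConn2 G H1 H2) :
    ¬ G.toSignedGraph.TwoConnected := by
  rintro ⟨-, hdel⟩
  have hmG : H1.t ∈ G.verts := hc.sub1.1 H1.t_mem
  have hGsH1 : G.s ∈ H1.verts := by rw [hc.src]; exact H1.s_mem
  have hGtH2 : G.t ∈ H2.verts := by rw [hc.tgt]; exact H2.t_mem
  have hsne : G.s ≠ H1.t := by rw [hc.src]; exact H1.s_ne_t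
  have htne : G.t ≠ H1.t := by rw [hc.tgt, hc.mid]; exact H2.s_ne_t.symm
  obtain ⟨-, hconn⟩ := hdel H1.t hmG
  have hrt := hconn G.s (mem_erase.mpr ⟨hsne, G.s_mem⟩) G.t (mem_erase.mpr ⟨htne, G.t_mem⟩)
  have key : ∀ u v : ℕ,
      Relation.ReflTransGen (G.toSignedGraph.deleteVert H1.t).Adj u v →
      u ∈ H1.verts ∧ u ≠ H1.t → v ∈ H1.verts ∧ v ≠ H1.t := by
    intro u v h
    induction h with
    | refl => exact id
    | @tail b c hab hbc ih =>
      intro hu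
      obtain ⟨hb1, hbne⟩ := ih hu
      have hbc' : ∃ e ∈ (G.toSignedGraph.deleteVert H1.t).edges,
          (G.toSignedGraph.deleteVert H1.t).Joins e b c := hbc
      obtain ⟨e', he', hj⟩ := hbc'
      have he2 : e' ∈ G.toSignedGraph.edges.filter
          (fun x => G.toSignedGraph.fst x ≠ H1.t ∧ G.toSignedGraph.snd x ≠ H1.t) := he'
      rw [mem_filter] at he2
      obtain ⟨heG, hfne, hsne'⟩ := he2
      have hj' : (G.fst e' = b ∧ G.snd e' = c) ∨ (G.fst e' = c ∧ G.snd e' = b) := hj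
      rw [← hc.edge_union, mem_union] at heG
      rcases heG with h1 | h2
      · have hf1 : H1.fst e' = G.fst e' := (hc.sub1.2.2 e' h1).1
        have hs1 : H1.snd e' = G.snd e' := (hc.sub1.2.2 e' h1).2.1
        rcases hj' with ⟨hja, hjb⟩ | ⟨hja, hjb⟩
        · subst hjb
          exact ⟨by rw [← hs1]; exact H1.snd_mem e' h1, hsne'⟩
        · subst hja
          exact ⟨by rw [← hf1]; exact H1.fst_mem e' h1, hfne⟩
      · have hbH2 : b ∈ H2.verts := by
          rcases hj' with ⟨hja, hjb⟩ | ⟨hja, hjb⟩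
          · rw [← hja, ← (hc.sub2.2.2 e' h2).1]; exact H2.fst_mem e' h2
          · rw [← hjb, ← (hc.sub2.2.2 e' h2).2.1]; exact H2.snd_mem e' h2
        have : b ∈ H1.verts ∩ H2.verts := mem_inter.mpr ⟨hb1, hbH2⟩
        rw [hc.vert_inter, mem_singleton] at this
        exact absurd this hbne
  have hfin := key G.s G.t hrt ⟨hGsH1, hsne⟩
  have : G.t ∈ H1.verts ∩ H2.verts := mem_inter.mpr ⟨hfin.1, hGtH2⟩
  rw [hc.vert_inter, mem_singleton] at this
  exact hfin.2 this

end SPAux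

/-- If `e = xy` is an edge in a 2-connected series-parallel
graph `(G,s,t)`, then `(G,x,y)` is a series-parallel graph. -/
theorem two_connected_SP_change_terminals (G : TTGraph) (hSP : IsSP G)
    (h2 : G.toSignedGraph.TwoConnected) (e : ℕ) (he : e ∈ G.edges) :
    ∃ G' : TTGraph, G'.toSignedGraph = G.toSignedGraph ∧
      G'.s = G.fst e ∧ G'.t = G.snd e ∧ IsSP G' := by
  have hne := SPAux.sp_ne hSP e he
  have hx : G.fst e ∈ G.verts := G.fst_mem e he
  have hy : G.snd e ∈ G.verts := G.snd_mem e he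
  refine ⟨⟨G.toSignedGraph, G.fst e, G.snd e, hx, hy, hne⟩, rfl, rfl, rfl, ?_⟩
  set G' : TTGraph := ⟨G.toSignedGraph, G.fst e, G.snd e, hx, hy, hne⟩ with hG'
  cases hSP with
  | k2 hk =>
    obtain ⟨hV, e0, hE, hj⟩ := hk
    rw [hE, Finset.mem_singleton] at he
    subst he
    rcases hj with ⟨h1, h2⟩ | ⟨h1, h2⟩
    · exact SPAux.sp_congr (IsSP.k2 ⟨hV, e, hE, Or.inl ⟨h1, h2⟩⟩) G' rfl rfl h1 h2
        (fun e' _ => ⟨rfl, rfl, rfl⟩)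
    · exact SPAux.sp_congr (SPAux.IsSP_rev (IsSP.k2 ⟨hV, e, hE, Or.inr ⟨h1, h2⟩⟩)) G'
        rfl rfl h1 h2 (fun e' _ => ⟨rfl, rfl, rfl⟩)
  | series hc sp1 sp2 =>
    exact absurd h2 (SPAux.series_not_two hc)
  | @parallel _ H1 H2 hc sp1 sp2 =>
    obtain ⟨f, hf⟩ := SPAux.fresh G.edges
    rw [← hc.edge_union, Finset.mem_union] at he
    rcases he with he1 | he2
    ·
      have hf1 : f ∉ H1.edges := fun h => hf (hc.sub1.2.1 h)
      have hfH2 : f ∉ H2.edges := fun h => hf (hc.sub2.2.1 h)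
      obtain ⟨G1, gv, ge, gs, gt, gff, gfs, gfuns, gsp⟩ := SPAux.addE sp1 f hf1 e he1
      let K : TTGraph :=
        ⟨H2.toSignedGraph, H1.s, H1.t,
          by rw [hc.src_eq]; exact H2.s_mem,
          by rw [hc.tgt_eq]; exact H2.t_mem, H1.s_ne_t⟩
      have hKsp : IsSP K :=
        SPAux.sp_congr sp2 K rfl rfl hc.src_eq hc.tgt_eq (fun e' _ => ⟨rfl, rfl, rfl⟩)
      have hfG1 : f ∈ G1.edges := by rw [ge]; exact Finset.mem_insert_self _ _
      have hRsp : IsSP (SPAux.subst G1 f K) := by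
        refine SPAux.subst_SP gsp f K hfG1 hKsp ?_ ?_ ?_ ?_
        · show H1.s = G1.fst f
          rw [gff]
        · show H1.t = G1.snd f
          rw [gfs]
        · intro v hvK hvG1
          rw [gv] at hvG1
          have h' : v ∈ H1.verts ∩ H2.verts := Finset.mem_inter.mpr ⟨hvG1, hvK⟩
          rw [hc.vert_inter] at h'
          rcases Finset.mem_insert.mp h' with h'' | h''
          · exact Or.inl h''
          · exact Or.inr (Finset.mem_singleton.mp h'')
        · intro e' heK heG1
          rw [ge] at heG1
          rcases Finset.mem_insert.mp heG1 with h' | h'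
          · exact h'
          · exact absurd heK fun hx => Finset.disjoint_left.mp hc.edge_disj h' hx
      refine SPAux.sp_congr hRsp G' ?_ ?_ ?_ ?_ ?_
      · show G.verts = G1.verts ∪ K.verts
        rw [gv]
        exact hc.vert_union.symm
      · show G.edges = G1.edges.erase f ∪ K.edges
        rw [ge, Finset.erase_insert hf1]
        exact hc.edge_union.symm
      · show G.fst e = G1.s
        rw [gs]
        exact ((hc.sub1.2.2 e he1).1).symm
      · show G.snd e = G1.t
        rw [gt]
        exact ((hc.sub1.2.2 e he1).2.1).symm
      · intro e'' he''
        rcases Finset.mem_union.mp he'' with hL | hR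
        · have hnef : e'' ≠ f := (Finset.mem_erase.mp hL).1
          have h1 : e'' ∈ H1.edges := by
            have := Finset.mem_of_mem_erase hL
            rw [ge] at this
            rcases Finset.mem_insert.mp this with h' | h'
            · exact absurd h' hnef
            · exact h'
          have hK : e'' ∉ K.edges := fun hx => Finset.disjoint_left.mp hc.edge_disj h1 hx
          rw [SPAux.subst_fst_not _ _ _ hK, SPAux.subst_snd_not _ _ _ hK,
            SPAux.subst_sign_not _ _ _ hK]
          obtain ⟨a1, a2, a3⟩ := gfuns e'' h1
          obtain ⟨b1, b2, b3⟩ := hc.sub1.2.2 e'' h1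
          rw [a1, a2, a3]
          exact ⟨b1.symm, b2.symm, b3.symm⟩
        · have hK : e'' ∈ K.edges := hR
          rw [SPAux.subst_fst_mem _ _ _ hK, SPAux.subst_snd_mem _ _ _ hK,
            SPAux.subst_sign_mem _ _ _ hK]
          obtain ⟨b1, b2, b3⟩ := hc.sub2.2.2 e'' hR
          exact ⟨b1.symm, b2.symm, b3.symm⟩
    · have hc' := SPAux.parComm hc
      have hfH2 : f ∉ H2.edges := fun h => hf (hc'.sub1.2.1 h)
      have hf1 : f ∉ H1.edges := fun h => hf (hc'.sub2.2.1 h)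
      obtain ⟨G1, gv, ge, gs, gt, gff, gfs, gfuns, gsp⟩ := SPAux.addE sp2 f hfH2 e he2
      let K : TTGraph :=
        ⟨H1.toSignedGraph, H2.s, H2.t,
          by rw [hc'.src_eq]; exact H1.s_mem,
          by rw [hc'.tgt_eq]; exact H1.t_mem, H2.s_ne_t⟩
      have hKsp : IsSP K :=
        SPAux.sp_congr sp1 K rfl rfl hc'.src_eq hc'.tgt_eq (fun e' _ => ⟨rfl, rfl, rfl⟩)
      have hfG1 : f ∈ G1.edges := by rw [ge]; exact Finset.mem_insert_self _ _
      have hRsp : IsSP (SPAux.subst G1 f K) := by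
        refine SPAux.subst_SP gsp f K hfG1 hKsp ?_ ?_ ?_ ?_
        · show H2.s = G1.fst f
          rw [gff]
        · show H2.t = G1.snd f
          rw [gfs]
        · intro v hvK hvG1
          rw [gv] at hvG1
          have h' : v ∈ H2.verts ∩ H1.verts := Finset.mem_inter.mpr ⟨hvG1, hvK⟩
          rw [hc'.vert_inter] at h'
          rcases Finset.mem_insert.mp h' with h'' | h''
          · exact Or.inl h''
          · exact Or.inr (Finset.mem_singleton.mp h'')
        · intro e' heK heG1
          rw [ge] at heG1
          rcases Finset.mem_insert.mp heG1 with h' | h'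
          · exact h'
          · exact absurd heK fun hx => Finset.disjoint_left.mp hc'.edge_disj h' hx
      refine SPAux.sp_congr hRsp G' ?_ ?_ ?_ ?_ ?_
      · show G.verts = G1.verts ∪ K.verts
        rw [gv]
        exact hc'.vert_union.symm
      · show G.edges = G1.edges.erase f ∪ K.edges
        rw [ge, Finset.erase_insert hfH2]
        exact hc'.edge_union.symm
      · show G.fst e = G1.s
        rw [gs]
        exact ((hc'.sub1.2.2 e he2).1).symm
      · show G.snd e = G1.t
        rw [gt]
        exact ((hc'.sub1.2.2 e he2).2.1).symm
      · intro e'' he''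
        rcases Finset.mem_union.mp he'' with hL | hR
        · have hnef : e'' ≠ f := (Finset.mem_erase.mp hL).1
          have h1 : e'' ∈ H2.edges := by
            have := Finset.mem_of_mem_erase hL
            rw [ge] at this
            rcases Finset.mem_insert.mp this with h' | h'
            · exact absurd h' hnef
            · exact h'
          have hK : e'' ∉ K.edges := fun hx => Finset.disjoint_left.mp hc'.edge_disj h1 hx
          rw [SPAux.subst_fst_not _ _ _ hK, SPAux.subst_snd_not _ _ _ hK,
            SPAux.subst_sign_not _ _ _ hK]
          obtain ⟨a1, a2, a3⟩ := gfuns e'' h1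
          obtain ⟨b1, b2, b3⟩ := hc'.sub1.2.2 e'' h1
          rw [a1, a2, a3]
          exact ⟨b1.symm, b2.symm, b3.symm⟩
        · have hK : e'' ∈ K.edges := hR
          rw [SPAux.subst_fst_mem _ _ _ hK, SPAux.subst_snd_mem _ _ _ hK,
            SPAux.subst_sign_mem _ _ _ hK]
          obtain ⟨b1, b2, b3⟩ := hc'.sub2.2.2 e'' hR
          exact ⟨b1.symm, b2.symm, b3.symm⟩
end

section
/- Each non-terminal vertex of a series-parallel graph has at least two distinct neighbours. -/
lemma adj_of_subgraph {H G : SignedGraph} (h : H.IsSubgraph G) {u v : ℕ}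
    (hadj : H.Adj u v) : G.Adj u v := by
  obtain ⟨e, he, hj⟩ := hadj
  refine ⟨e, h.2.1 he, ?_⟩
  obtain ⟨h1, h2, -⟩ := h.2.2 e he
  rcases hj with ⟨a, b⟩ | ⟨a, b⟩
  · exact Or.inl ⟨h1 ▸ a, h2 ▸ b⟩
  · exact Or.inr ⟨h1 ▸ a, h2 ▸ b⟩

lemma adj_mem {H : SignedGraph} {u v : ℕ} (hadj : H.Adj u v) : v ∈ H.verts := by
  obtain ⟨e, he, hj⟩ := hadj
  rcases hj with ⟨-, b⟩ | ⟨a, -⟩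
  · exact b ▸ H.snd_mem e he
  · exact a ▸ H.fst_mem e he

/-- In an SP graph, each terminal has a neighbour distinct from itself. -/
lemma sp_terminal_adj (G : TTGraph) (h : IsSP G) :
    (∃ u, u ≠ G.s ∧ G.toSignedGraph.Adj G.s u) ∧
    (∃ u, u ≠ G.t ∧ G.toSignedGraph.Adj G.t u) := by
  induction h with
  | @k2 G hk2 =>
    obtain ⟨-, e, he, hj⟩ := hk2
    have hes : e ∈ G.edges := he ▸ Finset.mem_singleton_self e
    constructor
    · exact ⟨G.t, Ne.symm G.s_ne_t, e, hes, hj⟩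
    · refine ⟨G.s, G.s_ne_t, e, hes, ?_⟩
      rcases hj with ⟨a, b⟩ | ⟨a, b⟩
      · exact Or.inr ⟨a, b⟩
      · exact Or.inl ⟨a, b⟩
  | series hc _ _ ih1 ih2 =>
    constructor
    · obtain ⟨u, hu, hadj⟩ := ih1.1
      exact ⟨u, hc.src ▸ hu, hc.src ▸ adj_of_subgraph hc.sub1 hadj⟩
    · obtain ⟨u, hu, hadj⟩ := ih2.2
      exact ⟨u, hc.tgt ▸ hu, hc.tgt ▸ adj_of_subgraph hc.sub2 hadj⟩
  | parallel hc _ _ ih1 _ =>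
    constructor
    · obtain ⟨u, hu, hadj⟩ := ih1.1
      exact ⟨u, hc.src ▸ hu, hc.src ▸ adj_of_subgraph hc.sub1 hadj⟩
    · obtain ⟨u, hu, hadj⟩ := ih1.2
      exact ⟨u, hc.tgt ▸ hu, hc.tgt ▸ adj_of_subgraph hc.sub1 hadj⟩

lemma sp_main : ∀ G : TTGraph, IsSP G → ∀ v ∈ G.verts, v ≠ G.s → v ≠ G.t →
    ∃ u w, u ≠ w ∧ G.toSignedGraph.Adj v u ∧ G.toSignedGraph.Adj v w := by
  intro G h
  induction h with
  | k2 hk2 =>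
    intro v hv hs ht
    rw [hk2.1, Finset.mem_insert, Finset.mem_singleton] at hv
    tauto
  | @series G H₁ H₂ hc h1 h2 ih1 ih2 =>
    intro v hv hs ht
    have hs1 : v ≠ H₁.s := hc.src ▸ hs
    have ht2 : v ≠ H₂.t := hc.tgt ▸ ht
    by_cases hmid : v = H₁.t
    · -- v is the middle vertex: take a neighbour in each half
      obtain ⟨u, hu, hadju⟩ := (sp_terminal_adj H₁ h1).2
      obtain ⟨w, hw, hadjw⟩ := (sp_terminal_adj H₂ h2).1
      refine ⟨u, w, ?_, ?_, ?_⟩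
      · intro huw
        have hu1 : u ∈ H₁.verts := adj_mem hadju
        have hw2 : w ∈ H₂.verts := adj_mem hadjw
        have : u ∈ H₁.verts ∩ H₂.verts := Finset.mem_inter.mpr ⟨hu1, huw ▸ hw2⟩
        rw [hc.vert_inter, Finset.mem_singleton] at this
        exact hu this
      · rw [hmid]; exact adj_of_subgraph hc.sub1 hadju
      · rw [hmid, hc.mid]; exact adj_of_subgraph hc.sub2 hadjw
    · rw [← hc.vert_union, Finset.mem_union] at hv
      rcases hv with hv1 | hv2
      · obtain ⟨u, w, huw, ha, hb⟩ := ih1 v hv1 hs1 hmid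
        exact ⟨u, w, huw, adj_of_subgraph hc.sub1 ha, adj_of_subgraph hc.sub1 hb⟩
      · have hmid2 : v ≠ H₂.s := hc.mid ▸ hmid
        obtain ⟨u, w, huw, ha, hb⟩ := ih2 v hv2 hmid2 ht2
        exact ⟨u, w, huw, adj_of_subgraph hc.sub2 ha, adj_of_subgraph hc.sub2 hb⟩
  | @parallel G H₁ H₂ hc h1 h2 ih1 ih2 =>
    intro v hv hs ht
    have hs1 : v ≠ H₁.s := hc.src ▸ hs
    have ht1 : v ≠ H₁.t := hc.tgt ▸ ht
    rw [← hc.vert_union, Finset.mem_union] at hv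
    rcases hv with hv1 | hv2
    · obtain ⟨u, w, huw, ha, hb⟩ := ih1 v hv1 hs1 ht1
      exact ⟨u, w, huw, adj_of_subgraph hc.sub1 ha, adj_of_subgraph hc.sub1 hb⟩
    · obtain ⟨u, w, huw, ha, hb⟩ := ih2 v hv2 (hc.src_eq ▸ hs1) (hc.tgt_eq ▸ ht1)
      exact ⟨u, w, huw, adj_of_subgraph hc.sub2 ha, adj_of_subgraph hc.sub2 hb⟩

/-- Each non-terminal vertex of a series-parallel graph has
at least two distinct neighbours. -/
theorem nonterminal_has_two_neighbours (G : TTGraph) (hSP : IsSP G)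
    (v : ℕ) (hv : v ∈ G.verts) (hs : v ≠ G.s) (ht : v ≠ G.t) :
    ∃ u w, u ≠ w ∧ G.toSignedGraph.Adj v u ∧ G.toSignedGraph.Adj v w := by
  exact sp_main G hSP v hv hs ht
end

section
/- Let G be a flow-admissible signed series-parallel graph with no nowhere-zero 6-flow that has the minimum number of edges among all such graphs. If G is of series type (i.e., G is a series connection of its parts), then each endpart of G is unbalanced. -/
namespace SPAux

open SignedGraph

lemma joins_symm {G : SignedGraph} {e u v : ℕ} (h : G.Joins e u v) : G.Joins e v u :=
  h.symm

lemma excess_zero (G : SignedGraph) (o₁ o₂ : ℕ → Bool) (φ : ℕ → ℤ) {v : ℕ}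
    (hv : v ∉ G.verts) : G.excess o₁ o₂ φ v = 0 := by
  apply Finset.sum_eq_zero
  intro e he
  have h1 : ¬ G.fst e = v := fun h => hv (h ▸ G.fst_mem e he)
  have h2 : ¬ G.snd e = v := fun h => hv (h ▸ G.snd_mem e he)
  rw [if_neg h1, if_neg h2]
  simp

lemma excess_add {G H₁ H₂ : SignedGraph}
    (s1 : H₁.IsSubgraph G) (s2 : H₂.IsSubgraph G)
    (hu : H₁.edges ∪ H₂.edges = G.edges) (hd : Disjoint H₁.edges H₂.edges)
    (o₁ o₂ : ℕ → Bool) (φ : ℕ → ℤ) (v : ℕ) :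
    G.excess o₁ o₂ φ v = H₁.excess o₁ o₂ φ v + H₂.excess o₁ o₂ φ v := by
  unfold SignedGraph.excess
  rw [← hu, Finset.sum_union hd]
  congr 1
  · exact Finset.sum_congr rfl fun e he => by rw [(s1.2.2 e he).1, (s1.2.2 e he).2.1]
  · exact Finset.sum_congr rfl fun e he => by rw [(s2.2.2 e he).1, (s2.2.2 e he).2.1]

lemma orient_restrict {H G : SignedGraph} (hs : H.IsSubgraph G) {o₁ o₂ : ℕ → Bool}
    (h : G.IsOrientation o₁ o₂) : H.IsOrientation o₁ o₂ := by
  intro e he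
  have := h e (hs.2.1 he)
  rw [(hs.2.2 e he).2.2]
  exact this

lemma negCount_append (G : SignedGraph) (a b : List ℕ) :
    G.negCount (a ++ b) = G.negCount a + G.negCount b := by
  unfold SignedGraph.negCount
  rw [List.filter_append, List.length_append]

lemma negCount_reverse (G : SignedGraph) (a : List ℕ) :
    G.negCount a.reverse = G.negCount a := by
  unfold SignedGraph.negCount
  rw [List.filter_reverse, List.length_reverse]

lemma negCount_congr {H G : SignedGraph} (hs : H.IsSubgraph G) {es : List ℕ}
    (h : ∀ e ∈ es, e ∈ H.edges) : G.negCount es = H.negCount es := by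
  unfold SignedGraph.negCount
  congr 1
  apply List.filter_congr
  intro e he
  rw [(hs.2.2 e (h e he)).2.2]

lemma path_transfer {H G : SignedGraph} (hs : H.IsSubgraph G) {vs es : List ℕ}
    (p : H.IsPath vs es) : G.IsPath vs es := by
  refine ⟨p.nonempty, p.len, p.vnodup, p.enodup,
    fun v hv => hs.1 (p.vmem v hv), fun e he => hs.2.1 (p.emem e he), ?_⟩
  intro i hi
  have hmem : es.getD i 0 ∈ H.edges := by
    rw [List.getD_eq_getElem es 0 hi]
    exact p.emem _ (List.getElem_mem hi)
  have := p.link i hi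
  unfold SignedGraph.Joins at this ⊢
  rw [← (hs.2.2 _ hmem).1, ← (hs.2.2 _ hmem).2.1]
  exact this

lemma cycle_transfer {H G : SignedGraph} (hs : H.IsSubgraph G) {vs es : List ℕ}
    (p : H.IsCycle vs es) : G.IsCycle vs es := by
  refine ⟨p.nonempty, p.len, p.vnodup, p.enodup,
    fun v hv => hs.1 (p.vmem v hv), fun e he => hs.2.1 (p.emem e he), ?_⟩
  intro i hi
  have hmem : es.getD i 0 ∈ H.edges := by
    rw [List.getD_eq_getElem es 0 hi]
    exact p.emem _ (List.getElem_mem hi)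
  have := p.link i hi
  unfold SignedGraph.Joins at this ⊢
  rw [← (hs.2.2 _ hmem).1, ← (hs.2.2 _ hmem).2.1]
  exact this

lemma unbalanced_transfer {H G : SignedGraph} (hs : H.IsSubgraph G)
    (h : H.IsUnbalanced) : G.IsUnbalanced := by
  obtain ⟨vs, es, hc, hodd⟩ := h
  exact ⟨vs, es, cycle_transfer hs hc, by
    rwa [negCount_congr hs (fun e he => hc.emem e he)]⟩

end SPAux
namespace SPAux

open SignedGraph

lemma getD_tail (l : List ℕ) (i : ℕ) : l.tail.getD i 0 = l.getD (i + 1) 0 := by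
  cases l <;> simp [List.getD]

lemma getD_dropLast (l : List ℕ) (i : ℕ) (h : i < l.length - 1) :
    l.dropLast.getD i 0 = l.getD i 0 := by
  have h1 : i < l.dropLast.length := by simp; omega
  have h2 : i < l.length := by omega
  rw [List.getD_eq_getElem _ 0 h1, List.getD_eq_getElem _ 0 h2, List.getElem_dropLast]

lemma getD_reverse (l : List ℕ) (i : ℕ) (h : i < l.length) :
    l.reverse.getD i 0 = l.getD (l.length - 1 - i) 0 := by
  have h1 : i < l.reverse.length := by simpa
  have h2 : l.length - 1 - i < l.length := by omega
  rw [List.getD_eq_getElem _ 0 h1, List.getD_eq_getElem _ 0 h2, List.getElem_reverse]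

lemma getD_head {l : List ℕ} {a : ℕ} (h : l.head? = some a) : l.getD 0 0 = a := by
  cases l <;> simp_all [List.getD]

lemma getD_last {l : List ℕ} {a : ℕ} (h : l.getLast? = some a) :
    l.getD (l.length - 1) 0 = a := by
  obtain ⟨ys, rfl⟩ := List.getLast?_eq_some_iff.mp h
  have h1 : (ys ++ [a]).length - 1 = ys.length := by simp
  rw [h1, List.getD_append_right _ _ _ _ le_rfl]
  simp [List.getD]

lemma getD_idx {l : List ℕ} {i j : ℕ} (h : i = j) : l.getD i 0 = l.getD j 0 := by rw [h]

lemma path_reverse {G : SignedGraph} {vs es : List ℕ} (p : G.IsPath vs es) :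
    G.IsPath vs.reverse es.reverse := by
  have hlen := p.len
  refine ⟨by simpa using p.nonempty, by simpa using hlen, by simpa using p.vnodup,
    by simpa using p.enodup, fun v hv => p.vmem v (List.mem_reverse.mp hv),
    fun e he => p.emem e (List.mem_reverse.mp he), ?_⟩
  intro i hi
  rw [List.length_reverse] at hi
  rw [getD_reverse _ _ hi, getD_reverse _ _ (by omega : i < vs.length),
    getD_reverse _ _ (by omega : i + 1 < vs.length)]
  have e1 : vs.length - 1 - i = (es.length - 1 - i) + 1 := by omega
  have e2 : vs.length - 1 - (i + 1) = es.length - 1 - i := by omega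
  rw [getD_idx e1, getD_idx e2]
  exact joins_symm (p.link (es.length - 1 - i) (by omega))

lemma path_append {G : SignedGraph} {vs₁ es₁ vs₂ es₂ : List ℕ} {c : ℕ}
    (p₁ : G.IsPath vs₁ es₁) (p₂ : G.IsPath vs₂ es₂)
    (h₁ : vs₁.getLast? = some c) (h₂ : vs₂.head? = some c)
    (hdisj : ∀ v ∈ vs₁, v ∈ vs₂ → v = c)
    (hedisj : ∀ e ∈ es₁, e ∉ es₂) :
    G.IsPath (vs₁ ++ vs₂.tail) (es₁ ++ es₂) := by
  have hl1 := p₁.len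
  have hl2 := p₂.len
  have hne2 : vs₂ ≠ [] := p₂.nonempty
  have hcons : vs₂ = c :: vs₂.tail := by
    cases vs₂ with
    | nil => exact absurd rfl hne2
    | cons a l => simp_all
  have hcnotin : c ∉ vs₂.tail := by
    have := p₂.vnodup
    rw [hcons, List.nodup_cons] at this
    exact this.1
  constructor
  · simp [p₁.nonempty]
  · simp; omega
  · rw [List.nodup_append]
    refine ⟨p₁.vnodup, p₂.vnodup.sublist (List.tail_sublist vs₂), ?_⟩
    intro v hv1 w hv2 hvw
    subst hvw
    exact hcnotin ((hdisj v hv1 (List.mem_of_mem_tail hv2)) ▸ hv2)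
  · rw [List.nodup_append]
    exact ⟨p₁.enodup, p₂.enodup, fun a ha b hb hab => by subst hab; exact hedisj a ha hb⟩
  · intro v hv
    rcases List.mem_append.mp hv with h | h
    · exact p₁.vmem v h
    · exact p₂.vmem v (List.mem_of_mem_tail h)
  · intro e he
    rcases List.mem_append.mp he with h | h
    · exact p₁.emem e h
    · exact p₂.emem e h
  · intro i hi
    rw [List.length_append] at hi
    by_cases hcase : i < es₁.length
    · rw [List.getD_append _ _ _ _ hcase, List.getD_append _ _ _ _ (by omega : i < vs₁.length),
        List.getD_append _ _ _ _ (by omega : i + 1 < vs₁.length)]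
      exact p₁.link i hcase
    · push_neg at hcase
      set j := i - es₁.length with hj
      have hjlt : j < es₂.length := by omega
      rw [List.getD_append_right _ _ _ _ hcase]
      have hv2 : (vs₁ ++ vs₂.tail).getD (i + 1) 0 = vs₂.getD (j + 1) 0 := by
        rw [List.getD_append_right _ _ _ _ (by omega : vs₁.length ≤ i + 1), getD_tail]
        exact getD_idx (by omega)
      have hv1 : (vs₁ ++ vs₂.tail).getD i 0 = vs₂.getD j 0 := by
        by_cases hj0 : j = 0
        · have : i < vs₁.length := by omega
          rw [List.getD_append _ _ _ _ this]
          have : i = vs₁.length - 1 := by omega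
          rw [getD_idx this, getD_last h₁, hj0, getD_head h₂]
        · rw [List.getD_append_right _ _ _ _ (by omega : vs₁.length ≤ i), getD_tail]
          exact getD_idx (by omega)
      rw [hv1, hv2]
      have : i - es₁.length = j := rfl
      rw [this]
      exact p₂.link j hjlt

/-- Build a cycle from a path `s → t` and a path `t → s`, vertex-disjoint
except at `s` and `t`, edge-disjoint. -/
lemma cycle_of_paths {G : SignedGraph} {vs₁ es₁ ws fs : List ℕ} {s t : ℕ}
    (p₁ : G.IsPath vs₁ es₁) (q : G.IsPath ws fs)
    (h₁s : vs₁.head? = some s) (h₁t : vs₁.getLast? = some t)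
    (hqs : ws.head? = some t) (hqt : ws.getLast? = some s)
    (hst : s ≠ t)
    (hv : ∀ v ∈ vs₁, v ∈ ws → v = s ∨ v = t)
    (he : ∀ e ∈ es₁, e ∉ fs) :
    G.IsCycle (vs₁ ++ ws.tail.dropLast) (es₁ ++ fs) := by
  have hl1 := p₁.len
  have hlq := q.len
  set m := es₁.length with hm
  set k := fs.length with hk
  -- endpoints distinct forces nonempty edge lists
  have hm1 : 1 ≤ m := by
    rcases Nat.eq_zero_or_pos m with h0 | h; swap; · omega
    exfalso
    have : vs₁.length = 1 := by omega
    have hh := getD_head h₁s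
    have hlast := getD_last h₁t
    rw [show vs₁.length - 1 = 0 from by omega] at hlast
    exact hst (by rw [← hh, hlast])
  have hk1 : 1 ≤ k := by
    rcases Nat.eq_zero_or_pos k with h0 | h; swap; · omega
    exfalso
    have : ws.length = 1 := by omega
    have hh := getD_head hqs
    have hlast := getD_last hqt
    rw [show ws.length - 1 = 0 from by omega] at hlast
    exact hst (by rw [← hlast, hh])
  -- index facts for ws
  have hws0 : ws.getD 0 0 = t := getD_head hqs
  have hwsk : ws.getD k 0 = s := by
    have := getD_last hqt
    rwa [show ws.length - 1 = k from by omega] at this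
  have hvs0 : vs₁.getD 0 0 = s := getD_head h₁s
  have hvsm : vs₁.getD m 0 = t := by
    have := getD_last h₁t
    rwa [show vs₁.length - 1 = m from by omega] at this
  -- the interior list
  have hintlen : ws.tail.dropLast.length = k - 1 := by simp; omega
  have hint : ∀ r < k - 1, ws.tail.dropLast.getD r 0 = ws.getD (r + 1) 0 := by
    intro r hr
    rw [getD_dropLast _ _ (by simp; omega), getD_tail]
  have hintmem : ∀ v ∈ ws.tail.dropLast, v ∈ ws :=
    fun v hv => List.mem_of_mem_tail (List.dropLast_sublist _ |>.mem hv)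
  -- nodup of interior and s,t not in interior
  have hwsnd := q.vnodup
  have hsnotin : s ∉ ws.tail.dropLast := by
    intro hmem
    obtain ⟨r, hr, hrv⟩ := List.getElem_of_mem hmem
    rw [hintlen] at hr
    have : ws.getD (r+1) 0 = s := by rw [← hint r hr, List.getD_eq_getElem _ 0 (by rw[hintlen]; omega), hrv]
    have h2 : ws.getD k 0 = s := hwsk
    rw [List.getD_eq_getElem _ 0 (by omega)] at this
    rw [List.getD_eq_getElem _ 0 (by omega)] at h2
    have := hwsnd.getElem_inj_iff.mp (this.trans h2.symm)
    omega
  have htnotin : t ∉ ws.tail.dropLast := by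
    intro hmem
    obtain ⟨r, hr, hrv⟩ := List.getElem_of_mem hmem
    rw [hintlen] at hr
    have : ws.getD (r+1) 0 = t := by rw [← hint r hr, List.getD_eq_getElem _ 0 (by rw[hintlen]; omega), hrv]
    have h2 : ws.getD 0 0 = t := hws0
    rw [List.getD_eq_getElem _ 0 (by omega)] at this
    rw [List.getD_eq_getElem _ 0 (by omega)] at h2
    have := hwsnd.getElem_inj_iff.mp (this.trans h2.symm)
    omega
  constructor
  · intro h
    rw [List.append_eq_nil_iff] at h
    have : es₁.length = 0 := by rw [h.1]; rfl
    omega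
  · simp only [List.length_append, List.length_dropLast, List.length_tail]
    omega
  · rw [List.nodup_append]
    refine ⟨p₁.vnodup, (hwsnd.sublist (List.tail_sublist ws)).sublist (List.dropLast_sublist _), ?_⟩
    intro v hv1 w hv2 hvw
    subst hvw
    rcases hv v hv1 (hintmem v hv2) with rfl | rfl
    · exact hsnotin hv2
    · exact htnotin hv2
  · rw [List.nodup_append]
    exact ⟨p₁.enodup, q.enodup, fun a ha b hb hab => by subst hab; exact he a ha hb⟩
  · intro v hvv
    rcases List.mem_append.mp hvv with h | h
    · exact p₁.vmem v h
    · exact q.vmem v (hintmem v h)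
  · intro e hee
    rcases List.mem_append.mp hee with h | h
    · exact p₁.emem e h
    · exact q.emem e h
  · intro i hi
    rw [List.length_append, ← hm, ← hk] at hi
    have hvslen : (vs₁ ++ ws.tail.dropLast).length = m + k := by simp; omega
    rw [hvslen]
    by_cases hcase : i < m
    · rw [List.getD_append _ _ _ _ hcase, List.getD_append _ _ _ _ (by omega : i < vs₁.length),
        Nat.mod_eq_of_lt (by omega : i + 1 < m + k),
        List.getD_append _ _ _ _ (by omega : i + 1 < vs₁.length)]
      exact p₁.link i hcase
    · push_neg at hcase
      set j := i - m with hjdef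
      have hjlt : j < k := by omega
      rw [List.getD_append_right _ _ _ _ hcase]
      have hedge : i - es₁.length = j := rfl
      rw [hedge]
      -- first vertex: position i = m + j
      have hv1 : (vs₁ ++ ws.tail.dropLast).getD i 0 = ws.getD j 0 := by
        by_cases hj0 : j = 0
        · rw [show i = m from by omega, List.getD_append _ _ _ _ (by omega : m < vs₁.length),
            hvsm, hj0]
          exact hws0.symm
        · rw [List.getD_append_right _ _ _ _ (by omega : vs₁.length ≤ i),
            show i - vs₁.length = j - 1 from by omega, hint (j-1) (by omega)]
          exact getD_idx (by omega)
      -- second vertex: position (i+1) % (m+k)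
      have hv2 : (vs₁ ++ ws.tail.dropLast).getD ((i + 1) % (m + k)) 0 = ws.getD (j + 1) 0 := by
        by_cases hjk : j = k - 1
        · rw [show i + 1 = m + k from by omega, Nat.mod_self,
            List.getD_append _ _ _ _ (by omega : 0 < vs₁.length), hvs0,
            show j + 1 = k from by omega]
          exact hwsk.symm
        · rw [Nat.mod_eq_of_lt (by omega : i + 1 < m + k),
            List.getD_append_right _ _ _ _ (by omega : vs₁.length ≤ i + 1),
            show i + 1 - vs₁.length = j from by omega, hint j (by omega)]
      rw [hv1, hv2]
      exact q.link j hjlt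

end SPAux
namespace SPAux

lemma head?_append_left {l m : List ℕ} (h : l ≠ []) : (l ++ m).head? = l.head? := by
  cases l <;> simp_all

lemma getLast?_tail {l : List ℕ} (h : l.tail ≠ []) : l.tail.getLast? = l.getLast? := by
  cases l with
  | nil => simp
  | cons a m =>
    simp only [List.tail_cons] at h ⊢
    cases m with
    | nil => exact absurd rfl h
    | cons b m' => rfl

lemma path_edges_ne_nil {G : SignedGraph} {vs es : List ℕ} {s t : ℕ}
    (p : G.IsPath vs es) (hs : vs.head? = some s) (ht : vs.getLast? = some t)
    (hst : s ≠ t) : es ≠ [] := by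
  intro h
  have hlen := p.len
  rw [h] at hlen
  simp at hlen
  have h0 := getD_head hs
  have h1 := getD_last ht
  rw [show vs.length - 1 = 0 from by omega] at h1
  exact hst (by rw [← h0, h1])

lemma parity_beq (a b : ℕ) :
    (decide (Even a) == decide (Even b)) = decide (Even (a + b)) := by
  by_cases e1 : Even a <;> by_cases e2 : Even b <;> simp [e1, e2, Nat.even_add]

/-- The flow relation between the excesses at the two terminals. -/
def FlowRel (H : TTGraph) (ε : Bool) : Prop :=
  ∀ o₁ o₂ φ, H.toSignedGraph.IsOrientation o₁ o₂ →
    (∀ v ∈ H.verts, v ≠ H.s → v ≠ H.t → H.toSignedGraph.excess o₁ o₂ φ v = 0) →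
    H.toSignedGraph.excess o₁ o₂ φ H.s =
      (if ε then -1 else 1) * H.toSignedGraph.excess o₁ o₂ φ H.t

/-- A path from `s` to `t` whose parity of negative edges is `ε`. -/
def GoodPath (H : TTGraph) (ε : Bool) : Prop :=
  ∃ vs es, H.toSignedGraph.IsPath vs es ∧ vs.head? = some H.s ∧
    vs.getLast? = some H.t ∧ ε = decide (Even (H.toSignedGraph.negCount es))

lemma key {H : TTGraph} (h : IsSP H) :
    H.toSignedGraph.IsUnbalanced ∨ ∃ ε, FlowRel H ε ∧ GoodPath H ε := by
  induction h with
  | @k2 G hK =>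
    obtain ⟨hverts, e, hedges, hjoins⟩ := hK
    right
    have hem : e ∈ G.edges := by rw [hedges]; exact Finset.mem_singleton_self e
    have hst := G.s_ne_t
    refine ⟨G.toSignedGraph.sign e, ?_, ?_⟩
    · intro o₁ o₂ φ hor _
      have horr := hor e hem
      simp only [SignedGraph.excess]
      rw [show G.toSignedGraph.edges = {e} from hedges, Finset.sum_singleton,
        Finset.sum_singleton]
      rcases hjoins with ⟨hf, hs⟩ | ⟨hf, hs⟩
      · rw [hf, hs]
        rw [if_pos rfl, if_neg (Ne.symm hst), if_neg hst, if_pos rfl]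
        cases hsgn : G.toSignedGraph.sign e with
        | false =>
          have := horr.2 hsgn
          rw [this]; simp
        | true =>
          have := horr.1 hsgn
          cases h1 : o₁ e <;> cases h2 : o₂ e <;> simp_all [dirVal] <;> ring
      · rw [hf, hs]
        rw [if_neg hst, if_pos rfl, if_pos rfl, if_neg (Ne.symm hst)]
        cases hsgn : G.toSignedGraph.sign e with
        | false =>
          have := horr.2 hsgn
          rw [this]; simp
        | true =>
          have := horr.1 hsgn
          cases h1 : o₁ e <;> cases h2 : o₂ e <;> simp_all [dirVal] <;> ring
    · refine ⟨[G.s, G.t], [e], ⟨by simp, rfl, by simp [hst], by simp, ?_, ?_, ?_⟩, rfl, rfl, ?_⟩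
      · intro v hv
        rw [hverts]
        simp at hv
        rcases hv with rfl | rfl <;> simp
      · intro f hf
        simp at hf
        rw [hf, hedges]
        exact Finset.mem_singleton_self e
      · intro i hi
        have : i = 0 := by simpa using Nat.lt_one_iff.mp (by simpa using hi)
        subst this
        simpa [List.getD] using hjoins
      · cases hsgn : G.toSignedGraph.sign e <;>
          simp [SignedGraph.negCount, hsgn, List.filter]
  | @series G X Y conn hsp1 hsp2 ih1 ih2 =>
    rcases ih1 with hub | ⟨ε₁, FR₁, P₁⟩
    · exact Or.inl (unbalanced_transfer conn.sub1 hub)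
    rcases ih2 with hub | ⟨ε₂, FR₂, P₂⟩
    · exact Or.inl (unbalanced_transfer conn.sub2 hub)
    right
    have hboth : ∀ v, v ∈ X.verts → v ∈ Y.verts → v = X.t := by
      intro v h1 h2
      have : v ∈ X.verts ∩ Y.verts := Finset.mem_inter.mpr ⟨h1, h2⟩
      rw [conn.vert_inter] at this
      simpa using this
    have hGverts : ∀ v, v ∈ X.verts ∨ v ∈ Y.verts → v ∈ G.verts := by
      intro v hv
      rw [← conn.vert_union]
      simpa [Finset.mem_union] using hv
    have hcs : X.t ≠ G.s := by
      rw [conn.src]; exact fun h => X.s_ne_t h.symm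
    have hct : X.t ≠ G.t := by
      rw [conn.mid, conn.tgt]; exact Y.s_ne_t
    have hsX : G.s ∈ X.verts := by rw [conn.src]; exact X.s_mem
    have htY : G.t ∈ Y.verts := by rw [conn.tgt]; exact Y.t_mem
    have hsnY : G.s ∉ Y.verts := fun h => hcs (hboth _ hsX h).symm
    have htnX : G.t ∉ X.verts := fun h => hct (hboth _ h htY).symm
    have hcY : X.t ∈ Y.verts := by rw [conn.mid]; exact Y.s_mem
    refine ⟨ε₁ == ε₂, ?_, ?_⟩
    · intro o₁ o₂ φ hor hcons
      have eadd : ∀ v, G.toSignedGraph.excess o₁ o₂ φ v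
          = X.toSignedGraph.excess o₁ o₂ φ v + Y.toSignedGraph.excess o₁ o₂ φ v :=
        fun v => excess_add conn.sub1 conn.sub2 conn.edge_union conn.edge_disj o₁ o₂ φ v
      have hintX : ∀ v ∈ X.verts, v ≠ X.s → v ≠ X.t →
          X.toSignedGraph.excess o₁ o₂ φ v = 0 := by
        intro v hv hvs hvt
        have hnY : v ∉ Y.verts := fun h => hvt (hboth v hv h)
        have h1 : G.toSignedGraph.excess o₁ o₂ φ v = 0 :=
          hcons v (hGverts v (Or.inl hv)) (by rw [conn.src]; exact hvs)
            (fun h => htnX (h ▸ hv))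
        have h2 := eadd v
        rw [h1, excess_zero _ _ _ _ hnY] at h2
        linarith
      have hintY : ∀ v ∈ Y.verts, v ≠ Y.s → v ≠ Y.t →
          Y.toSignedGraph.excess o₁ o₂ φ v = 0 := by
        intro v hv hvs hvt
        have hnX : v ∉ X.verts := by
          intro h
          exact hvs (by rw [← conn.mid]; exact hboth v h hv)
        have h1 : G.toSignedGraph.excess o₁ o₂ φ v = 0 :=
          hcons v (hGverts v (Or.inr hv)) (fun h => hnX (h ▸ hsX))
            (by rw [conn.tgt]; exact hvt)
        have h2 := eadd v
        rw [h1, excess_zero _ _ _ _ hnX] at h2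
        linarith
      have FR1 := FR₁ o₁ o₂ φ (orient_restrict conn.sub1 hor) hintX
      have FR2 := FR₂ o₁ o₂ φ (orient_restrict conn.sub2 hor) hintY
      rw [← conn.mid] at FR2
      have h1 : G.toSignedGraph.excess o₁ o₂ φ G.s
          = X.toSignedGraph.excess o₁ o₂ φ X.s := by
        rw [← conn.src]
        have h2 := eadd G.s
        rw [excess_zero _ _ _ _ hsnY] at h2
        linarith
      have h2 : G.toSignedGraph.excess o₁ o₂ φ G.t
          = Y.toSignedGraph.excess o₁ o₂ φ Y.t := by
        rw [← conn.tgt]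
        have h3 := eadd G.t
        rw [excess_zero _ _ _ _ htnX] at h3
        linarith
      have h3 : X.toSignedGraph.excess o₁ o₂ φ X.t
          + Y.toSignedGraph.excess o₁ o₂ φ X.t = 0 := by
        have h4 := eadd X.t
        rw [hcons X.t (hGverts _ (Or.inl X.t_mem)) hcs hct] at h4
        linarith
      rw [h1, h2, FR1]
      rw [FR2] at h3
      cases ε₁ <;> cases ε₂ <;> simp_all <;> linarith
    · obtain ⟨vs₁, es₁, p₁, h1s, h1t, hpar1⟩ := P₁
      obtain ⟨vs₂, es₂, p₂, h2s, h2t, hpar2⟩ := P₂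
      have hne2 : es₂ ≠ [] := path_edges_ne_nil p₂ h2s h2t Y.s_ne_t
      have htail : vs₂.tail ≠ [] := by
        intro h
        have hlen := p₂.len
        have h1 : vs₂.length ≤ 1 := by
          cases vs₂ with
          | nil => simp
          | cons a l => simp_all
        have h2 : es₂.length = 0 := by omega
        exact hne2 (List.length_eq_zero_iff.mp h2)
      refine ⟨vs₁ ++ vs₂.tail, es₁ ++ es₂,
        path_append (path_transfer conn.sub1 p₁) (path_transfer conn.sub2 p₂)
          (c := Y.s) (by rw [← conn.mid]; exact h1t) h2s ?_ ?_, ?_, ?_, ?_⟩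
      · intro v hv1 hv2
        rw [← conn.mid]
        exact hboth v (p₁.vmem v hv1) (p₂.vmem v hv2)
      · intro e he1 he2
        exact Finset.disjoint_left.mp conn.edge_disj (p₁.emem e he1) (p₂.emem e he2)
      · rw [head?_append_left p₁.nonempty, h1s, conn.src]
      · rw [List.getLast?_append_of_ne_nil _ htail, getLast?_tail htail, h2t, conn.tgt]
      · rw [negCount_append, negCount_congr conn.sub1 p₁.emem,
          negCount_congr conn.sub2 p₂.emem, hpar1, hpar2, parity_beq]
  | @parallel G X Y conn hsp1 hsp2 ih1 ih2 =>
    rcases ih1 with hub | ⟨ε₁, FR₁, P₁⟩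
    · exact Or.inl (unbalanced_transfer conn.sub1 hub)
    rcases ih2 with hub | ⟨ε₂, FR₂, P₂⟩
    · exact Or.inl (unbalanced_transfer conn.sub2 hub)
    have hboth : ∀ v, v ∈ X.verts → v ∈ Y.verts → v = X.s ∨ v = X.t := by
      intro v h1 h2
      have : v ∈ X.verts ∩ Y.verts := Finset.mem_inter.mpr ⟨h1, h2⟩
      rw [conn.vert_inter] at this
      simpa using this
    have hGverts : ∀ v, v ∈ X.verts ∨ v ∈ Y.verts → v ∈ G.verts := by
      intro v hv
      rw [← conn.vert_union]
      simpa [Finset.mem_union] using hv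
    obtain ⟨vs₁, es₁, p₁, h1s, h1t, hpar1⟩ := P₁
    obtain ⟨vs₂, es₂, p₂, h2s, h2t, hpar2⟩ := P₂
    by_cases hee : ε₁ = ε₂
    · right
      refine ⟨ε₁, ?_, ?_⟩
      · intro o₁ o₂ φ hor hcons
        have eadd : ∀ v, G.toSignedGraph.excess o₁ o₂ φ v
            = X.toSignedGraph.excess o₁ o₂ φ v + Y.toSignedGraph.excess o₁ o₂ φ v :=
          fun v => excess_add conn.sub1 conn.sub2 conn.edge_union conn.edge_disj o₁ o₂ φ v
        have hintX : ∀ v ∈ X.verts, v ≠ X.s → v ≠ X.t →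
            X.toSignedGraph.excess o₁ o₂ φ v = 0 := by
          intro v hv hvs hvt
          have hnY : v ∉ Y.verts := by
            intro h
            rcases hboth v hv h with h' | h' <;> [exact hvs h'; exact hvt h']
          have h1 : G.toSignedGraph.excess o₁ o₂ φ v = 0 :=
            hcons v (hGverts v (Or.inl hv)) (by rw [conn.src]; exact hvs)
              (by rw [conn.tgt]; exact hvt)
          have h2 := eadd v
          rw [h1, excess_zero _ _ _ _ hnY] at h2
          linarith
        have hintY : ∀ v ∈ Y.verts, v ≠ Y.s → v ≠ Y.t →
            Y.toSignedGraph.excess o₁ o₂ φ v = 0 := by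
          intro v hv hvs hvt
          have hnX : v ∉ X.verts := by
            intro h
            rcases hboth v h hv with h' | h'
            · exact hvs (by rw [← conn.src_eq]; exact h')
            · exact hvt (by rw [← conn.tgt_eq]; exact h')
          have h1 : G.toSignedGraph.excess o₁ o₂ φ v = 0 :=
            hcons v (hGverts v (Or.inr hv))
              (by rw [conn.src, conn.src_eq]; exact hvs)
              (by rw [conn.tgt, conn.tgt_eq]; exact hvt)
          have h2 := eadd v
          rw [h1, excess_zero _ _ _ _ hnX] at h2
          linarith
        have FR1 := FR₁ o₁ o₂ φ (orient_restrict conn.sub1 hor) hintX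
        have FR2 := FR₂ o₁ o₂ φ (orient_restrict conn.sub2 hor) hintY
        rw [← conn.src_eq, ← conn.tgt_eq] at FR2
        rw [eadd G.s, eadd G.t, conn.src, conn.tgt, FR1, FR2, ← hee]
        ring
      · refine ⟨vs₁, es₁, path_transfer conn.sub1 p₁, ?_, ?_, ?_⟩
        · rw [h1s, conn.src]
        · rw [h1t, conn.tgt]
        · rw [negCount_congr conn.sub1 p₁.emem]
          exact hpar1
    · left
      -- build an unbalanced cycle from the two parity-distinct paths
      have hq := path_reverse (path_transfer conn.sub2 p₂)
      have hqs : vs₂.reverse.head? = some X.t := by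
        rw [List.head?_reverse, h2t, conn.tgt_eq]
      have hqt : vs₂.reverse.getLast? = some X.s := by
        rw [List.getLast?_reverse, h2s, conn.src_eq]
      have hcyc := cycle_of_paths (path_transfer conn.sub1 p₁) hq h1s h1t hqs hqt
        X.s_ne_t ?_ ?_
      · refine ⟨_, _, hcyc, ?_⟩
        rw [negCount_append, negCount_reverse, negCount_congr conn.sub1 p₁.emem,
          negCount_congr conn.sub2 p₂.emem]
        rw [← Nat.not_even_iff_odd]
        intro hcontra
        apply hee
        rw [hpar1, hpar2]
        have := Nat.even_add.mp hcontra
        by_cases e1 : Even (X.toSignedGraph.negCount es₁) <;>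
          by_cases e2 : Even (Y.toSignedGraph.negCount es₂) <;>
          simp_all
      · intro v hv1 hv2
        exact hboth v (p₁.vmem v hv1) (p₂.vmem v (List.mem_reverse.mp hv2))
      · intro e he1 he2
        exact Finset.disjoint_left.mp conn.edge_disj (p₁.emem e he1)
          (p₂.emem e (List.mem_reverse.mp he2))

end SPAux
namespace SPAux

lemma sp_edges_nonempty {H : TTGraph} (h : IsSP H) : H.edges.Nonempty := by
  induction h with
  | k2 hK =>
    obtain ⟨_, e, he, _⟩ := hK
    exact ⟨e, by rw [he]; exact Finset.mem_singleton_self e⟩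
  | series conn h1 h2 ih1 ih2 =>
    obtain ⟨e, he⟩ := ih1
    exact ⟨e, by rw [← conn.edge_union]; exact Finset.mem_union_left _ he⟩
  | parallel conn h1 h2 ih1 ih2 =>
    obtain ⟨e, he⟩ := ih1
    exact ⟨e, by rw [← conn.edge_union]; exact Finset.mem_union_left _ he⟩

lemma sp_of_list {G : TTGraph} {l : List TTGraph} (h : IsSeriesConnList G l)
    (hs : ∀ H ∈ l, IsSP H) : IsSP G := by
  induction h with
  | two conn => exact IsSP.series conn (hs _ (by simp)) (hs _ (by simp))
  | cons conn hl ih =>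
    exact IsSP.series conn (hs _ (by simp)) (ih fun H hH => hs H (by simp [hH]))

lemma list_ne_nil {G : TTGraph} {l : List TTGraph} (h : IsSeriesConnList G l) : l ≠ [] := by
  cases h <;> simp

lemma series_assoc {G K G' L' Hh : TTGraph} (h1 : IsSeriesConn2 G K G')
    (h2 : IsSeriesConn2 G' L' Hh) :
    ∃ L : TTGraph, IsSeriesConn2 G L Hh ∧ IsSeriesConn2 L K L' := by
  have hKG' : ∀ v, v ∈ K.verts → v ∈ G'.verts → v = K.t := by
    intro v hv1 hv2
    have : v ∈ K.verts ∩ G'.verts := Finset.mem_inter.mpr ⟨hv1, hv2⟩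
    rw [h1.vert_inter] at this
    simpa using this
  have hL'H : ∀ v, v ∈ L'.verts → v ∈ Hh.verts → v = L'.t := by
    intro v hv1 hv2
    have : v ∈ L'.verts ∩ Hh.verts := Finset.mem_inter.mpr ⟨hv1, hv2⟩
    rw [h2.vert_inter] at this
    simpa using this
  have hL'sub : L'.verts ⊆ G'.verts := h2.sub1.1
  have hHsub : Hh.verts ⊆ G'.verts := h2.sub2.1
  have hsnet : K.s ≠ L'.t := by
    intro h
    have : K.s = K.t := hKG' K.s K.s_mem (h ▸ hL'sub L'.t_mem)
    exact K.s_ne_t this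
  refine ⟨⟨⟨K.verts ∪ L'.verts, K.edges ∪ L'.edges, G.fst, G.snd, G.sign, ?_, ?_⟩,
    K.s, L'.t, Finset.mem_union_left _ K.s_mem, Finset.mem_union_right _ L'.t_mem,
    hsnet⟩, ?_, ?_⟩
  · intro e he
    rcases Finset.mem_union.mp he with h | h
    · exact Finset.mem_union_left _ (by rw [← (h1.sub1.2.2 e h).1]; exact K.fst_mem e h)
    · refine Finset.mem_union_right _ ?_
      rw [← (h1.sub2.2.2 e (h2.sub1.2.1 h)).1, ← (h2.sub1.2.2 e h).1]
      exact L'.fst_mem e h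
  · intro e he
    rcases Finset.mem_union.mp he with h | h
    · exact Finset.mem_union_left _ (by rw [← (h1.sub1.2.2 e h).2.1]; exact K.snd_mem e h)
    · refine Finset.mem_union_right _ ?_
      rw [← (h1.sub2.2.2 e (h2.sub1.2.1 h)).2.1, ← (h2.sub1.2.2 e h).2.1]
      exact L'.snd_mem e h
  · -- IsSeriesConn2 G L Hh
    refine ⟨⟨?_, ?_, fun e he => ⟨rfl, rfl, rfl⟩⟩, ?_, ?_, ?_, h2.mid, ?_, ?_, h1.src, ?_⟩
    · intro v hv
      rcases Finset.mem_union.mp hv with h | h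
      · exact h1.sub1.1 h
      · exact h1.sub2.1 (hL'sub h)
    · intro e he
      rcases Finset.mem_union.mp he with h | h
      · exact h1.sub1.2.1 h
      · exact h1.sub2.2.1 (h2.sub1.2.1 h)
    · -- Hh is a subgraph of G
      refine ⟨fun v hv => h1.sub2.1 (hHsub hv), fun e he => h1.sub2.2.1 (h2.sub2.2.1 he), ?_⟩
      intro e he
      have hG' := h2.sub2.2.2 e he
      have hG := h1.sub2.2.2 e (h2.sub2.2.1 he)
      exact ⟨hG'.1.trans hG.1, hG'.2.1.trans hG.2.1, hG'.2.2.trans hG.2.2⟩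
    · show (K.verts ∪ L'.verts) ∪ Hh.verts = G.verts
      rw [Finset.union_assoc, h2.vert_union, h1.vert_union]
    · -- vert_inter
      show (K.verts ∪ L'.verts) ∩ Hh.verts = {L'.t}
      apply Finset.ext
      intro v
      simp only [Finset.mem_inter, Finset.mem_union, Finset.mem_singleton]
      constructor
      · rintro ⟨hKL, hH⟩
        rcases hKL with h | h
        · have hvG' : v ∈ G'.verts := hHsub hH
          have : v = K.t := hKG' v h hvG'
          have : v = L'.s := by rw [this, h1.mid, h2.src]
          exact hL'H v (this ▸ L'.s_mem) hH
        · exact hL'H v h hH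
      · rintro rfl
        exact ⟨Or.inr L'.t_mem, by rw [h2.mid]; exact Hh.s_mem⟩
    · show (K.edges ∪ L'.edges) ∪ Hh.edges = G.edges
      rw [Finset.union_assoc, h2.edge_union, h1.edge_union]
    · show Disjoint (K.edges ∪ L'.edges) Hh.edges
      rw [Finset.disjoint_union_left]
      exact ⟨h1.edge_disj.mono_right h2.sub2.2.1, h2.edge_disj⟩
    · exact h1.tgt.trans h2.tgt
  · -- IsSeriesConn2 L K L'
    refine ⟨⟨Finset.subset_union_left, Finset.subset_union_left,
        fun e he => ⟨(h1.sub1.2.2 e he).1, (h1.sub1.2.2 e he).2.1, (h1.sub1.2.2 e he).2.2⟩⟩,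
      ⟨Finset.subset_union_right, Finset.subset_union_right, ?_⟩,
      rfl, ?_, h1.mid.trans h2.src, rfl, ?_, rfl, rfl⟩
    · intro e he
      have hG' := h2.sub1.2.2 e he
      have hG := h1.sub2.2.2 e (h2.sub1.2.1 he)
      exact ⟨hG'.1.trans hG.1, hG'.2.1.trans hG.2.1, hG'.2.2.trans hG.2.2⟩
    · show K.verts ∩ L'.verts = {K.t}
      apply Finset.ext
      intro v
      simp only [Finset.mem_inter, Finset.mem_singleton]
      constructor
      · rintro ⟨h, h'⟩
        exact hKG' v h (hL'sub h')
      · rintro rfl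
        refine ⟨K.t_mem, ?_⟩
        rw [h1.mid, h2.src]
        exact L'.s_mem
    · show Disjoint K.edges L'.edges
      exact h1.edge_disj.mono_right h2.sub1.2.1

lemma last_extract {G : TTGraph} {l : List TTGraph} (h : IsSeriesConnList G l)
    (hs : ∀ K ∈ l, IsSP K) :
    ∀ {Hh : TTGraph} {l₁ : List TTGraph}, l = l₁ ++ [Hh] →
      ∃ L, IsSeriesConn2 G L Hh ∧ IsSP L := by
  induction h with
  | @two G H₁ H₂ conn =>
    intro Hh l₁ heq
    match l₁, heq with
    | [], heq => simp at heq
    | [a], heq =>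
      simp at heq
      obtain ⟨rfl, rfl⟩ := heq
      exact ⟨H₁, conn, hs H₁ (by simp)⟩
    | a :: b :: m, heq => simp at heq
  | @cons G G' Hd lrest conn hlist ih =>
    intro Hh l₁ heq
    match l₁, heq with
    | [], heq =>
      simp at heq
      exact absurd heq.2 (list_ne_nil hlist)
    | a :: m, heq =>
      simp at heq
      obtain ⟨rfl, hrest⟩ := heq
      obtain ⟨L', connL', hspL'⟩ := ih (fun K hK => hs K (by simp [hK])) hrest
      obtain ⟨L, c1, c2⟩ := series_assoc conn connL'
      exact ⟨L, c1, IsSP.series c2 (hs Hd (by simp)) hspL'⟩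

lemma head_extract {G Hh : TTGraph} {l : List TTGraph} (h : IsSeriesConnList G (Hh :: l))
    (hs : ∀ K ∈ Hh :: l, IsSP K) : ∃ Y, IsSeriesConn2 G Hh Y ∧ IsSP Y := by
  cases h with
  | two conn => exact ⟨_, conn, hs _ (by simp)⟩
  | cons conn hlist =>
    exact ⟨_, conn, sp_of_list hlist (fun K hK => hs K (by simp [hK]))⟩

lemma split_flow {G X Y : TTGraph} (conn : IsSeriesConn2 G X Y) {k : ℕ}
    {o₁ o₂ : ℕ → Bool} {φ : ℕ → ℤ}
    (hf : G.toSignedGraph.IsNZFlow k o₁ o₂ φ)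
    (h0 : X.toSignedGraph.excess o₁ o₂ φ X.t = 0) :
    X.toSignedGraph.IsNZFlow k o₁ o₂ φ ∧ Y.toSignedGraph.IsNZFlow k o₁ o₂ φ := by
  have hboth : ∀ v, v ∈ X.verts → v ∈ Y.verts → v = X.t := by
    intro v h1 h2
    have : v ∈ X.verts ∩ Y.verts := Finset.mem_inter.mpr ⟨h1, h2⟩
    rw [conn.vert_inter] at this
    simpa using this
  have hGverts : ∀ v, v ∈ X.verts ∨ v ∈ Y.verts → v ∈ G.verts := by
    intro v hv
    rw [← conn.vert_union]
    simpa [Finset.mem_union] using hv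
  have eadd : ∀ v, G.toSignedGraph.excess o₁ o₂ φ v
      = X.toSignedGraph.excess o₁ o₂ φ v + Y.toSignedGraph.excess o₁ o₂ φ v :=
    fun v => excess_add conn.sub1 conn.sub2 conn.edge_union conn.edge_disj o₁ o₂ φ v
  have hY0 : Y.toSignedGraph.excess o₁ o₂ φ X.t = 0 := by
    have h1 := eadd X.t
    rw [hf.conserve X.t (hGverts _ (Or.inl X.t_mem)), h0] at h1
    linarith
  constructor
  · refine ⟨orient_restrict conn.sub1 hf.orient,
      fun e he => hf.nonzero e (conn.sub1.2.1 he),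
      fun e he => hf.bounded e (conn.sub1.2.1 he), ?_⟩
    intro v hv
    by_cases hvt : v = X.t
    · rw [hvt]; exact h0
    · have hnY : v ∉ Y.verts := fun h => hvt (hboth v hv h)
      have h1 := eadd v
      rw [hf.conserve v (hGverts _ (Or.inl hv)), excess_zero _ _ _ _ hnY] at h1
      linarith
  · refine ⟨orient_restrict conn.sub2 hf.orient,
      fun e he => hf.nonzero e (conn.sub2.2.1 he),
      fun e he => hf.bounded e (conn.sub2.2.1 he), ?_⟩
    intro v hv
    by_cases hvs : v = Y.s
    · rw [hvs, ← conn.mid]; exact hY0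
    · have hnX : v ∉ X.verts := by
        intro h
        exact hvs (by rw [← conn.mid]; exact hboth v h hv)
      have h1 := eadd v
      rw [hf.conserve v (hGverts _ (Or.inr hv)), excess_zero _ _ _ _ hnX] at h1
      linarith

lemma merge_flow {G X Y : TTGraph} (conn : IsSeriesConn2 G X Y)
    (hx : X.toSignedGraph.HasNZFlow 6) (hy : Y.toSignedGraph.HasNZFlow 6) :
    G.toSignedGraph.HasNZFlow 6 := by
  classical
  obtain ⟨a₁, a₂, α, ha⟩ := hx
  obtain ⟨b₁, b₂, β, hb⟩ := hy
  have hmemY : ∀ e ∈ Y.edges, e ∉ X.edges :=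
    fun e he h => Finset.disjoint_left.mp conn.edge_disj h he
  refine ⟨(fun e => if e ∈ X.edges then a₁ e else b₁ e),
          (fun e => if e ∈ X.edges then a₂ e else b₂ e),
          (fun e => if e ∈ X.edges then α e else β e), ?_, ?_, ?_, ?_⟩
  · intro e he
    rw [← conn.edge_union] at he
    rcases Finset.mem_union.mp he with h | h
    · have hsg : G.sign e = X.sign e := ((conn.sub1.2.2 e h).2.2).symm
      simp only [h, if_true, hsg]
      exact ha.orient e h
    · have hnx := hmemY e h
      have hsg : G.sign e = Y.sign e := ((conn.sub2.2.2 e h).2.2).symm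
      simp only [hnx, if_false, hsg]
      exact hb.orient e h
  · intro e he
    rw [← conn.edge_union] at he
    rcases Finset.mem_union.mp he with h | h
    · simp only [h, if_true]; exact ha.nonzero e h
    · simp only [hmemY e h, if_false]; exact hb.nonzero e h
  · intro e he
    rw [← conn.edge_union] at he
    rcases Finset.mem_union.mp he with h | h
    · simp only [h, if_true]; exact ha.bounded e h
    · simp only [hmemY e h, if_false]; exact hb.bounded e h
  · intro v hv
    have eadd := excess_add conn.sub1 conn.sub2 conn.edge_union conn.edge_disj
      (fun e => if e ∈ X.edges then a₁ e else b₁ e)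
      (fun e => if e ∈ X.edges then a₂ e else b₂ e)
      (fun e => if e ∈ X.edges then α e else β e) v
    rw [eadd]
    have hXeq : X.toSignedGraph.excess
        (fun e => if e ∈ X.edges then a₁ e else b₁ e)
        (fun e => if e ∈ X.edges then a₂ e else b₂ e)
        (fun e => if e ∈ X.edges then α e else β e) v
        = X.toSignedGraph.excess a₁ a₂ α v := by
      apply Finset.sum_congr rfl
      intro e he
      simp only [he, if_true]
    have hYeq : Y.toSignedGraph.excess
        (fun e => if e ∈ X.edges then a₁ e else b₁ e)
        (fun e => if e ∈ X.edges then a₂ e else b₂ e)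
        (fun e => if e ∈ X.edges then α e else β e) v
        = Y.toSignedGraph.excess b₁ b₂ β v := by
      apply Finset.sum_congr rfl
      intro e he
      simp only [hmemY e he, if_false]
    rw [hXeq, hYeq]
    have h1 : X.toSignedGraph.excess a₁ a₂ α v = 0 := by
      by_cases h : v ∈ X.verts
      · exact ha.conserve v h
      · exact excess_zero _ _ _ _ h
    have h2 : Y.toSignedGraph.excess b₁ b₂ β v = 0 := by
      by_cases h : v ∈ Y.verts
      · exact hb.conserve v h
      · exact excess_zero _ _ _ _ h
    rw [h1, h2]; ring

lemma core {G X Y : TTGraph} (hmin : MinCounterexample G) (conn : IsSeriesConn2 G X Y)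
    (hX : IsSP X) (hY : IsSP Y) :
    X.toSignedGraph.IsUnbalanced ∧ Y.toSignedGraph.IsUnbalanced := by
  obtain ⟨k, o₁, o₂, φ, hf⟩ := hmin.2.1
  have hboth : ∀ v, v ∈ X.verts → v ∈ Y.verts → v = X.t := by
    intro v h1 h2
    have : v ∈ X.verts ∩ Y.verts := Finset.mem_inter.mpr ⟨h1, h2⟩
    rw [conn.vert_inter] at this
    simpa using this
  have hGverts : ∀ v, v ∈ X.verts ∨ v ∈ Y.verts → v ∈ G.verts := by
    intro v hv
    rw [← conn.vert_union]
    simpa [Finset.mem_union] using hv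
  have hcs : X.t ≠ G.s := by
    rw [conn.src]; exact fun h => X.s_ne_t h.symm
  have hct : X.t ≠ G.t := by
    rw [conn.mid, conn.tgt]; exact Y.s_ne_t
  have hsX : G.s ∈ X.verts := by rw [conn.src]; exact X.s_mem
  have htY : G.t ∈ Y.verts := by rw [conn.tgt]; exact Y.t_mem
  have hsnY : G.s ∉ Y.verts := fun h => hcs (hboth _ hsX h).symm
  have htnX : G.t ∉ X.verts := fun h => hct (hboth _ h htY).symm
  have eadd : ∀ v, G.toSignedGraph.excess o₁ o₂ φ v
      = X.toSignedGraph.excess o₁ o₂ φ v + Y.toSignedGraph.excess o₁ o₂ φ v :=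
    fun v => excess_add conn.sub1 conn.sub2 conn.edge_union conn.edge_disj o₁ o₂ φ v
  -- the contradiction machine
  have contra : X.toSignedGraph.excess o₁ o₂ φ X.t = 0 → False := by
    intro h0
    obtain ⟨fx, fy⟩ := split_flow conn hf h0
    have admX : X.toSignedGraph.FlowAdmissible := ⟨k, o₁, o₂, φ, fx⟩
    have admY : Y.toSignedGraph.FlowAdmissible := ⟨k, o₁, o₂, φ, fy⟩
    have hcards : G.edges.card = X.edges.card + Y.edges.card := by
      rw [← conn.edge_union]
      exact Finset.card_union_of_disjoint conn.edge_disj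
    have hXpos : 0 < X.edges.card := Finset.card_pos.mpr (sp_edges_nonempty hX)
    have hYpos : 0 < Y.edges.card := Finset.card_pos.mpr (sp_edges_nonempty hY)
    have h6X : X.toSignedGraph.HasNZFlow 6 := by
      by_contra h
      have := hmin.2.2.2 X hX admX h
      omega
    have h6Y : Y.toSignedGraph.HasNZFlow 6 := by
      by_contra h
      have := hmin.2.2.2 Y hY admY h
      omega
    exact hmin.2.2.1 (merge_flow conn h6X h6Y)
  constructor
  · by_contra hbal
    rcases key hX with hub | ⟨ε, FR, _⟩
    · exact hbal hub
    apply contra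
    have hintX : ∀ v ∈ X.verts, v ≠ X.s → v ≠ X.t →
        X.toSignedGraph.excess o₁ o₂ φ v = 0 := by
      intro v hv _ hvt
      have hnY : v ∉ Y.verts := fun h => hvt (hboth v hv h)
      have h1 := eadd v
      rw [hf.conserve v (hGverts _ (Or.inl hv)), excess_zero _ _ _ _ hnY] at h1
      linarith
    have hFR := FR o₁ o₂ φ (orient_restrict conn.sub1 hf.orient) hintX
    have hXs : X.toSignedGraph.excess o₁ o₂ φ X.s = 0 := by
      rw [← conn.src]
      have h1 := eadd G.s
      rw [hf.conserve G.s G.s_mem, excess_zero _ _ _ _ hsnY] at h1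
      linarith
    rw [hXs] at hFR
    cases ε <;> simp at hFR <;> linarith
  · by_contra hbal
    rcases key hY with hub | ⟨ε, FR, _⟩
    · exact hbal hub
    apply contra
    have hintY : ∀ v ∈ Y.verts, v ≠ Y.s → v ≠ Y.t →
        Y.toSignedGraph.excess o₁ o₂ φ v = 0 := by
      intro v hv hvs _
      have hnX : v ∉ X.verts := by
        intro h
        exact hvs (by rw [← conn.mid]; exact hboth v h hv)
      have h1 := eadd v
      rw [hf.conserve v (hGverts _ (Or.inr hv)), excess_zero _ _ _ _ hnX] at h1
      linarith
    have hFR := FR o₁ o₂ φ (orient_restrict conn.sub2 hf.orient) hintY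
    have hYt : Y.toSignedGraph.excess o₁ o₂ φ Y.t = 0 := by
      rw [← conn.tgt]
      have h1 := eadd G.t
      rw [hf.conserve G.t G.t_mem, excess_zero _ _ _ _ htnX] at h1
      linarith
    rw [hYt] at hFR
    have hYc : Y.toSignedGraph.excess o₁ o₂ φ X.t = 0 := by
      rw [conn.mid]
      cases ε <;> simp at hFR <;> linarith
    have h1 := eadd X.t
    rw [hf.conserve X.t (hGverts _ (Or.inl X.t_mem)), hYc] at h1
    linarith

end SPAux
/-- If `G` is a minimum counterexample and `G` is of series
type, then each endpart of `G` is unbalanced. -/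
theorem min_counterexample_endparts_unbalanced (G : TTGraph)
    (hmin : MinCounterexample G) (hser : IsSeriesType G) :
    ∀ H : TTGraph, IsEndpartOf H G → H.toSignedGraph.IsUnbalanced := by
  rintro H ⟨l, ⟨hlist, hsp, -⟩, hend⟩
  rcases hend with hhead | hlast
  · obtain ⟨l', rfl⟩ := List.head?_eq_some_iff.mp hhead
    obtain ⟨Y, conn, hspY⟩ := SPAux.head_extract hlist hsp
    exact (SPAux.core hmin conn (hsp H (by simp)) hspY).1
  · obtain ⟨l₁, rfl⟩ := List.getLast?_eq_some_iff.mp hlast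
    obtain ⟨L, conn, hspL⟩ := SPAux.last_extract hlist hsp rfl
    exact (SPAux.core hmin conn hspL (hsp H (by simp))).2
end
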